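/- arXiv:1706.03755 — 4 statements merged into one kernel-verified Lean document; each statement's English description precedes it below -/
import Mathlib

section
/- For any x ≥ 2 and any multiplicative function f with |f(n)| ≤ 1 for all n, we have ∑_{n ≤ x} f(n) log n = ∑_{p prime, m ≥ 1, pm ≤ x} f(m) f(p) log p + O(x), where the implied constant is absolute. -/
open Finset MeasureTheory
open scoped Classical BigOperators

/-- The primes `p ≤ y`. -/
noncomputable def primesUpTo (y : ℝ) : Finset ℕ :=
  (Finset.Icc 1 ⌊y⌋₊).filter Nat.Prime

/-- The truncated Euler product `F_x(s) = ∏_{p ≤ x} (1 + ∑_{k ≥ 1} f(p^k) p^{-ks})`. -/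
noncomputable def Fx (f : ℕ → ℂ) (x : ℝ) (s : ℂ) : ℂ :=
  ∏ p ∈ primesUpTo x, (1 + ∑' k : ℕ, f (p ^ (k + 1)) / (p : ℂ) ^ (((k : ℂ) + 1) * s))

/-- `L(x)² = ∑_{|N| ≤ (log x)² + 1} (N²+1)⁻¹ sup_{|t-N| ≤ 1/2} |F_x(1+it)|²`. -/
noncomputable def Lsq (f : ℕ → ℂ) (x : ℝ) : ℝ :=
  ∑ N ∈ Finset.Icc (-⌊(Real.log x) ^ 2 + 1⌋) ⌊(Real.log x) ^ 2 + 1⌋,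
    (1 / ((N : ℝ) ^ 2 + 1)) *
      sSup ((fun t : ℝ => ‖Fx f x (1 + t * Complex.I)‖ ^ 2) ''
        Set.Icc ((N : ℝ) - 1 / 2) ((N : ℝ) + 1 / 2))

/-- The set `P_k` of primes `p` with `(log x)^4 < p ≤ x/2` and
`x^{1-e^{1-k}} < p ≤ x^{1-e^{-k}}`. -/
noncomputable def Pk (x : ℝ) (k : ℕ) : Finset ℕ :=
  (Finset.Icc 1 ⌊x⌋₊).filter (fun p => p.Prime ∧ (Real.log x) ^ 4 < (p : ℝ) ∧
    (p : ℝ) ≤ x / 2 ∧ x ^ (1 - Real.exp (1 - (k : ℝ))) < (p : ℝ) ∧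
    (p : ℝ) ≤ x ^ (1 - Real.exp (-(k : ℝ))))

/-- The triple convolution sum `S_k(x)`. -/
noncomputable def Sk (f : ℕ → ℂ) (x : ℝ) (k : ℕ) : ℂ :=
  ∑ p ∈ Pk x k, ∑ q ∈ primesUpTo (x / p), ∑ n ∈ Finset.Icc 1 ⌊x / (p * q)⌋₊,
    (f p * (Real.log p : ℂ) / (Real.log (x / p) : ℂ)) * f n * f q * (Real.log q : ℂ)

/-! ### Auxiliary lemmas -/

open ArithmeticFunction

noncomputable def B0 : ℝ := ∑' n : ℕ, (n : ℝ) ^ (-(3/2) : ℝ)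

lemma summable_rpow32 : Summable (fun n : ℕ => (n : ℝ) ^ (-(3/2) : ℝ)) :=
  Real.summable_nat_rpow.mpr (by norm_num)

lemma B0_nonneg : 0 ≤ B0 :=
  tsum_nonneg fun n => Real.rpow_nonneg (Nat.cast_nonneg n) _

lemma sum_rpow_le (S : Finset ℕ) : ∑ n ∈ S, (n : ℝ) ^ (-(3/2) : ℝ) ≤ B0 :=
  Summable.sum_le_tsum S (fun n _ => Real.rpow_nonneg (Nat.cast_nonneg n) _) summable_rpow32

lemma log_div_sq_le {p : ℕ} (hp : 2 ≤ p) :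
    Real.log p / (p : ℝ) ^ 2 ≤ 2 * (p : ℝ) ^ (-(3/2) : ℝ) := by
  have hp0 : (0 : ℝ) < p := by positivity
  have h1 : Real.log p ≤ 2 * (p : ℝ) ^ ((1:ℝ)/2) := by
    have := Real.log_rpow hp0 ((1:ℝ)/2)
    have h2 : Real.log ((p:ℝ) ^ ((1:ℝ)/2)) ≤ (p:ℝ) ^ ((1:ℝ)/2) := by
      have := Real.log_le_sub_one_of_pos (x := (p:ℝ) ^ ((1:ℝ)/2)) (by positivity)
      linarith
    nlinarith [this]
  have h3 : (p : ℝ) ^ ((1:ℝ)/2) / (p:ℝ) ^ 2 = (p : ℝ) ^ (-(3/2) : ℝ) := by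
    rw [← Real.rpow_natCast (p:ℝ) 2, ← Real.rpow_sub hp0]
    norm_num
  calc Real.log p / (p:ℝ)^2 ≤ 2 * (p:ℝ) ^ ((1:ℝ)/2) / (p:ℝ)^2 := by
        apply div_le_div_of_nonneg_right h1 (by positivity) |>.trans_eq rfl
    _ = 2 * ((p:ℝ) ^ ((1:ℝ)/2) / (p:ℝ)^2) := by ring
    _ = 2 * (p : ℝ) ^ (-(3/2) : ℝ) := by rw [h3]

lemma sum_log_div_sq_le (S : Finset ℕ) (hS : ∀ p ∈ S, 2 ≤ p) :
    ∑ p ∈ S, Real.log p / (p : ℝ) ^ 2 ≤ 2 * B0 := by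
  calc ∑ p ∈ S, Real.log p / (p : ℝ) ^ 2
      ≤ ∑ p ∈ S, 2 * (p : ℝ) ^ (-(3/2) : ℝ) :=
        Finset.sum_le_sum fun p hp => log_div_sq_le (hS p hp)
    _ = 2 * ∑ p ∈ S, (p : ℝ) ^ (-(3/2) : ℝ) := by rw [Finset.mul_sum]
    _ ≤ 2 * B0 := by linarith [sum_rpow_le S]

lemma swap_lemma (N : ℕ) (g : ℕ → ℕ → ℂ) :
    ∑ n ∈ Icc 1 N, ∑ pr ∈ n.divisorsAntidiagonal, g pr.1 pr.2
      = ∑ d ∈ Icc 1 N, ∑ m ∈ Icc 1 (N / d), g d m := by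
  rw [Finset.sum_sigma', Finset.sum_sigma']
  refine Finset.sum_nbij' (fun a => ⟨a.2.1, a.2.2⟩) (fun a => ⟨a.1 * a.2, (a.1, a.2)⟩)
    ?_ ?_ ?_ ?_ ?_
  · rintro ⟨n, d, m⟩ h
    simp only [Finset.mem_sigma, Finset.mem_Icc, Nat.mem_divisorsAntidiagonal] at h ⊢
    obtain ⟨⟨hn1, hnN⟩, hdm, hn0⟩ := h
    have hd0 : 0 < d := Nat.pos_of_ne_zero (by rintro rfl; simp at hdm; omega)
    have hm0 : 0 < m := Nat.pos_of_ne_zero (by rintro rfl; simp at hdm; omega)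
    refine ⟨⟨hd0, ?_⟩, hm0, ?_⟩
    · calc d ≤ d * m := Nat.le_mul_of_pos_right d hm0
        _ = n := hdm
        _ ≤ N := hnN
    · rw [Nat.le_div_iff_mul_le hd0]
      calc m * d = d * m := Nat.mul_comm m d
        _ = n := hdm
        _ ≤ N := hnN
  · rintro ⟨d, m⟩ h
    simp only [Finset.mem_sigma, Finset.mem_Icc, Nat.mem_divisorsAntidiagonal] at h
    obtain ⟨⟨hd1, hdN⟩, hm1, hmN⟩ := h
    have hmd : m * d ≤ N := (Nat.le_div_iff_mul_le (by omega)).mp hmN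
    have hdm : d * m ≤ N := by rw [Nat.mul_comm]; exact hmd
    have h0 : d * m ≠ 0 := Nat.mul_ne_zero (by omega) (by omega)
    exact Finset.mem_sigma.mpr ⟨Finset.mem_Icc.mpr ⟨Nat.one_le_iff_ne_zero.mpr h0, hdm⟩,
      Nat.mem_divisorsAntidiagonal.mpr ⟨rfl, h0⟩⟩
  · rintro ⟨n, d, m⟩ h
    simp only [Finset.mem_sigma, Nat.mem_divisorsAntidiagonal] at h
    obtain ⟨-, hdm, -⟩ := h
    simp [hdm]
  · rintro ⟨d, m⟩ h; rfl
  · rintro ⟨n, d, m⟩ h; rfl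

lemma geom_tail_le {p : ℕ} (hp : 2 ≤ p) (N : ℕ) :
    ∑ k ∈ Icc 2 N, ((1 : ℝ) / p) ^ k ≤ 2 * ((1 : ℝ) / p) ^ 2 := by
  have hr : (0:ℝ) ≤ 1 / p := by positivity
  have hr2 : (1:ℝ) / p ≤ 1 / 2 := by
    apply one_div_le_one_div_of_le <;> [norm_num; exact_mod_cast hp]
  rw [← Finset.Ico_add_one_right_eq_Icc, Finset.sum_Ico_eq_sum_range]
  calc ∑ j ∈ Finset.range (N + 1 - 2), ((1:ℝ)/p) ^ (2 + j)
      = ((1:ℝ)/p)^2 * ∑ j ∈ Finset.range (N + 1 - 2), ((1:ℝ)/p) ^ j := by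
        rw [Finset.mul_sum]; exact Finset.sum_congr rfl fun j _ => pow_add _ 2 j
    _ ≤ ((1:ℝ)/p)^2 * ∑ j ∈ Finset.range (N + 1 - 2), ((1:ℝ)/2) ^ j := by
        apply mul_le_mul_of_nonneg_left _ (by positivity)
        exact Finset.sum_le_sum fun j _ => pow_le_pow_left₀ hr hr2 j
    _ ≤ ((1:ℝ)/p)^2 * 2 := by
        apply mul_le_mul_of_nonneg_left (sum_geometric_two_le _) (by positivity)
    _ = 2 * ((1:ℝ)/p)^2 := by ring

lemma nonprime_sum_le (N : ℕ) :
    ∑ d ∈ (Icc 1 N).filter (fun d => ¬ d.Prime), vonMangoldt d / (d : ℝ) ≤ 4 * B0 := by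
  classical
  set D := (Icc 1 N).filter (fun d => IsPrimePow d ∧ ¬ d.Prime) with hD
  have hsub : D ⊆ (Icc 1 N).filter (fun d => ¬ d.Prime) := by
    intro d hd; simp only [hD, Finset.mem_filter] at hd ⊢; exact ⟨hd.1, hd.2.2⟩
  have hzero : ∀ d ∈ (Icc 1 N).filter (fun d => ¬ d.Prime), d ∉ D →
      vonMangoldt d / (d : ℝ) = 0 := by
    intro d hd hdD
    simp only [hD, Finset.mem_filter] at hd hdD
    have : ¬ IsPrimePow d := fun h => hdD ⟨hd.1, h, hd.2⟩
    rw [vonMangoldt_apply, if_neg this, zero_div]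
  rw [← Finset.sum_subset hsub hzero]
  have hrep : ∀ d ∈ D, d.minFac.Prime ∧ 2 ≤ d.factorization d.minFac ∧
      d.minFac ^ d.factorization d.minFac = d ∧ d.factorization d.minFac ≤ N ∧
      d.minFac ≤ N := by
    intro d hd
    simp only [hD, Finset.mem_filter, Finset.mem_Icc] at hd
    obtain ⟨⟨hd1, hdN⟩, hpp, hnp⟩ := hd
    have hne1 : d ≠ 1 := hpp.ne_one
    have hpprime : d.minFac.Prime := Nat.minFac_prime hne1
    have heq : d.minFac ^ d.factorization d.minFac = d := hpp.minFac_pow_factorization_eq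
    set k := d.factorization d.minFac with hk
    have hk0 : k ≠ 0 := by rintro h; rw [h, pow_zero] at heq; exact hne1 heq.symm
    have hk1 : k ≠ 1 := by rintro h; rw [h, pow_one] at heq; exact hnp (heq ▸ hpprime)
    have hk2 : 2 ≤ k := by omega
    have hkd : k < 2 ^ k := Nat.lt_two_pow_self (n := k)
    have h2p : 2 ^ k ≤ d.minFac ^ k := Nat.pow_le_pow_left hpprime.two_le k
    have hkN : k ≤ N := by
      have : k < d := lt_of_lt_of_le hkd (le_trans h2p (le_of_eq heq))
      omega
    exact ⟨hpprime, hk2, heq, hkN, le_trans (Nat.minFac_le (by omega)) hdN⟩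
  have hterm : ∀ d ∈ D, vonMangoldt d / (d : ℝ)
      = Real.log d.minFac * ((1 : ℝ) / d.minFac) ^ (d.factorization d.minFac) := by
    intro d hd
    obtain ⟨hp, hk2, heq, -, -⟩ := hrep d hd
    have hpp : IsPrimePow d := by
      simp only [hD, Finset.mem_filter] at hd; exact hd.2.1
    rw [vonMangoldt_apply, if_pos hpp]
    rw [div_pow, one_pow]
    have : (d : ℝ) = (d.minFac : ℝ) ^ (d.factorization d.minFac) := by
      exact_mod_cast (congrArg (Nat.cast (R := ℝ)) heq).symm
    rw [this]; ring
  rw [Finset.sum_congr rfl hterm]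
  set g : ℕ × ℕ → ℝ := fun q => Real.log q.1 * ((1:ℝ)/q.1) ^ q.2 with hg
  set φ : ℕ → ℕ × ℕ := fun d => (d.minFac, d.factorization d.minFac) with hφ
  have himg : ∑ d ∈ D, Real.log d.minFac * ((1:ℝ)/d.minFac) ^ (d.factorization d.minFac)
      = ∑ q ∈ D.image φ, g q := by
    rw [Finset.sum_image]
    intro d1 h1 d2 h2 heq
    obtain ⟨-, -, e1, -, -⟩ := hrep d1 h1
    obtain ⟨-, -, e2, -, -⟩ := hrep d2 h2
    have h1' : d1.minFac = d2.minFac := congrArg Prod.fst heq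
    have h2' : d1.factorization d1.minFac = d2.factorization d2.minFac :=
      congrArg Prod.snd heq
    rw [← e1, ← e2, h2', h1']
  rw [himg]
  have hsub2 : D.image φ ⊆ ((Icc 1 N).filter Nat.Prime) ×ˢ Icc 2 N := by
    intro q hq
    simp only [Finset.mem_image] at hq
    obtain ⟨d, hd, rfl⟩ := hq
    obtain ⟨hp, hk2, -, hkN, hpN⟩ := hrep d hd
    simp only [hφ, Finset.mem_product, Finset.mem_filter, Finset.mem_Icc]
    exact ⟨⟨⟨hp.one_lt.le, hpN⟩, hp⟩, hk2, hkN⟩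
  calc ∑ q ∈ D.image φ, g q
      ≤ ∑ q ∈ ((Icc 1 N).filter Nat.Prime) ×ˢ Icc 2 N, g q := by
        apply Finset.sum_le_sum_of_subset_of_nonneg hsub2
        rintro q hq -
        simp only [Finset.mem_product, Finset.mem_filter, Finset.mem_Icc] at hq
        have h1 : (1:ℝ) ≤ q.1 := by exact_mod_cast hq.1.1.1
        exact mul_nonneg (Real.log_nonneg h1) (by positivity)
    _ = ∑ p ∈ (Icc 1 N).filter Nat.Prime, ∑ k ∈ Icc 2 N,
          Real.log p * ((1:ℝ)/p) ^ k := Finset.sum_product _ _ _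
    _ ≤ ∑ p ∈ (Icc 1 N).filter Nat.Prime, 2 * (Real.log p / (p:ℝ)^2) := by
        apply Finset.sum_le_sum
        intro p hp
        simp only [Finset.mem_filter] at hp
        have h2 : 2 ≤ p := hp.2.two_le
        have hlog : 0 ≤ Real.log p := Real.log_nonneg (by exact_mod_cast h2.trans' one_le_two)
        calc ∑ k ∈ Icc 2 N, Real.log p * ((1:ℝ)/p) ^ k
            = Real.log p * ∑ k ∈ Icc 2 N, ((1:ℝ)/p) ^ k := by rw [Finset.mul_sum]
          _ ≤ Real.log p * (2 * ((1:ℝ)/p)^2) :=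
              mul_le_mul_of_nonneg_left (geom_tail_le h2 N) hlog
          _ = 2 * (Real.log p / (p:ℝ)^2) := by
              rw [div_pow, one_pow]; ring
    _ ≤ 2 * (2 * B0) := by
        rw [← Finset.mul_sum]
        have := sum_log_div_sq_le ((Icc 1 N).filter Nat.Prime)
          (fun p hp => (Finset.mem_filter.mp hp).2.two_le)
        linarith
    _ = 4 * B0 := by ring

theorem stmt0 :
    ∃ C : ℝ, 0 < C ∧ ∀ x : ℝ, 2 ≤ x → ∀ f : ℕ → ℂ, f 1 = 1 →
      (∀ m n : ℕ, Nat.Coprime m n → f (m * n) = f m * f n) →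
      (∀ n : ℕ, ‖f n‖ ≤ 1) →
      ‖(∑ n ∈ Finset.Icc 1 ⌊x⌋₊, f n * (Real.log n : ℂ)) -
        ∑ p ∈ primesUpTo x, ∑ m ∈ Finset.Icc 1 ⌊x / p⌋₊,
          f m * f p * (Real.log p : ℂ)‖ ≤ C * x := by
  refine ⟨8 * B0 + 1, by linarith [B0_nonneg], ?_⟩
  intro x hx f hf1 hmul hbd
  have hx0 : (0:ℝ) < x := by linarith
  set N := ⌊x⌋₊ with hN
  have hxN : (N:ℝ) ≤ x := Nat.floor_le hx0.le
  set P := (Icc 1 N).filter Nat.Prime with hP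
  set Q := (Icc 1 N).filter (fun d => ¬ d.Prime) with hQ
  -- Step 1: divisor identity and swap
  have E1 : ∑ n ∈ Icc 1 N, f n * (Real.log n : ℂ)
      = ∑ d ∈ Icc 1 N, ((vonMangoldt d : ℝ) : ℂ) * ∑ m ∈ Icc 1 (N / d), f (d * m) := by
    have e1 : ∑ n ∈ Icc 1 N, f n * (Real.log n : ℂ)
        = ∑ n ∈ Icc 1 N, ∑ pr ∈ n.divisorsAntidiagonal,
            ((vonMangoldt pr.1 : ℝ) : ℂ) * f (pr.1 * pr.2) := by
      refine Finset.sum_congr rfl fun n hn => ?_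
      have h1 : ∀ pr ∈ n.divisorsAntidiagonal,
          ((vonMangoldt pr.1 : ℝ) : ℂ) * f (pr.1 * pr.2)
            = ((vonMangoldt pr.1 : ℝ) : ℂ) * f n := fun pr hpr => by
        rw [(Nat.mem_divisorsAntidiagonal.mp hpr).1]
      rw [Finset.sum_congr rfl h1, ← Finset.sum_mul]
      have h2 : ∑ pr ∈ n.divisorsAntidiagonal, ((vonMangoldt pr.1 : ℝ) : ℂ)
          = ((Real.log n : ℝ) : ℂ) := by
        rw [Nat.sum_divisorsAntidiagonal (f := fun d _ => ((vonMangoldt d : ℝ) : ℂ))]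
        rw [← Complex.ofReal_sum]
        exact congrArg _ vonMangoldt_sum
      rw [h2, mul_comm]
    rw [e1, swap_lemma N (fun d m => ((vonMangoldt d : ℝ) : ℂ) * f (d * m))]
    exact Finset.sum_congr rfl fun d _ => (Finset.mul_sum _ _ _).symm
  -- rewrite the target sum
  have hT : ∑ p ∈ primesUpTo x, ∑ m ∈ Icc 1 ⌊x / (p : ℝ)⌋₊, f m * f p * (Real.log p : ℂ)
      = ∑ p ∈ P, ∑ m ∈ Icc 1 (N / p), f m * f p * (Real.log p : ℂ) := by
    have h1 : primesUpTo x = P := by rw [hP, hN]; rfl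
    rw [h1]
    refine Finset.sum_congr rfl fun p hp => ?_
    rw [Nat.floor_div_natCast, ← hN]
  -- split over primes / non-primes
  have E2 : ∑ d ∈ Icc 1 N, ((vonMangoldt d : ℝ) : ℂ) * ∑ m ∈ Icc 1 (N / d), f (d * m)
      = (∑ d ∈ P, ((vonMangoldt d : ℝ) : ℂ) * ∑ m ∈ Icc 1 (N / d), f (d * m))
        + ∑ d ∈ Q, ((vonMangoldt d : ℝ) : ℂ) * ∑ m ∈ Icc 1 (N / d), f (d * m) :=
    (Finset.sum_filter_add_sum_filter_not (Icc 1 N) Nat.Prime _).symm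
  -- the bracket form on primes
  have hbrak : ∀ p ∈ P,
      ((vonMangoldt p : ℝ) : ℂ) * (∑ m ∈ Icc 1 (N / p), f (p * m))
          - ∑ m ∈ Icc 1 (N / p), f m * f p * (Real.log p : ℂ)
        = ((Real.log p : ℝ) : ℂ) * ∑ m ∈ Icc 1 (N / p), (f (p * m) - f m * f p) := by
    intro p hp
    have hpp : p.Prime := (Finset.mem_filter.mp hp).2
    rw [vonMangoldt_apply_prime hpp, Finset.mul_sum, Finset.mul_sum,
      ← Finset.sum_sub_distrib]
    exact Finset.sum_congr rfl fun m _ => by ring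
  -- count bound on primes
  have hcount : ∀ p ∈ P,
      ‖∑ m ∈ Icc 1 (N / p), (f (p * m) - f m * f p)‖
        ≤ 2 * ((N / p / p : ℕ) : ℝ) := by
    intro p hp
    have hpp : p.Prime := (Finset.mem_filter.mp hp).2
    rw [← Finset.sum_filter_add_sum_filter_not (Icc 1 (N / p)) (fun m => p ∣ m)]
    have hz : ∑ m ∈ (Icc 1 (N / p)).filter (fun m => ¬ p ∣ m), (f (p * m) - f m * f p)
        = 0 := by
      apply Finset.sum_eq_zero
      intro m hm
      have hnd : ¬ p ∣ m := (Finset.mem_filter.mp hm).2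
      have hcop : Nat.Coprime p m := (Nat.Prime.coprime_iff_not_dvd hpp).mpr hnd
      rw [hmul p m hcop]; ring
    rw [hz, add_zero]
    calc ‖∑ m ∈ (Icc 1 (N / p)).filter (fun m => p ∣ m),
            (f (p * m) - f m * f p)‖
        ≤ ∑ m ∈ (Icc 1 (N / p)).filter (fun m => p ∣ m),
            ‖f (p * m) - f m * f p‖ := norm_sum_le _ _
      _ ≤ ∑ m ∈ (Icc 1 (N / p)).filter (fun m => p ∣ m), 2 := by
          apply Finset.sum_le_sum
          intro m hm
          calc ‖f (p * m) - f m * f p‖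
              ≤ ‖f (p * m)‖ + ‖f m * f p‖ := by
                simpa [sub_eq_add_neg] using norm_add_le (f (p * m)) (-(f m * f p))
            _ ≤ 1 + 1 := by
                refine add_le_add (hbd _) ?_
                rw [norm_mul]
                exact mul_le_one₀ (hbd m) (norm_nonneg _) (hbd p)
            _ = 2 := by norm_num
      _ = 2 * ((Icc 1 (N / p)).filter (fun m => p ∣ m)).card := by
          rw [Finset.sum_const, nsmul_eq_mul]; ring
      _ = 2 * ((N / p / p : ℕ) : ℝ) := by
          rw [show Icc 1 (N / p) = Ioc 0 (N / p) from (Finset.Icc_add_one_left_eq_Ioc 0 (N / p)).symm ▸ rfl]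
          rw [Nat.Ioc_filter_dvd_card_eq_div]
  -- bound for the non-prime part
  have HA : ‖∑ d ∈ Q, ((vonMangoldt d : ℝ) : ℂ) * ∑ m ∈ Icc 1 (N / d), f (d * m)‖
      ≤ 4 * B0 * x := by
    calc ‖∑ d ∈ Q, ((vonMangoldt d : ℝ) : ℂ) * ∑ m ∈ Icc 1 (N / d), f (d * m)‖
        ≤ ∑ d ∈ Q, ‖((vonMangoldt d : ℝ) : ℂ) * ∑ m ∈ Icc 1 (N / d), f (d * m)‖ :=
          norm_sum_le _ _
      _ ≤ ∑ d ∈ Q, x * (vonMangoldt d / (d : ℝ)) := by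
          apply Finset.sum_le_sum
          intro d hd
          have hd1 : 1 ≤ d := (Finset.mem_Icc.mp (Finset.mem_filter.mp hd).1).1
          have hd0 : (0:ℝ) < d := by exact_mod_cast hd1
          have habs : ‖∑ m ∈ Icc 1 (N / d), f (d * m)‖ ≤ ((N / d : ℕ) : ℝ) := by
            calc ‖∑ m ∈ Icc 1 (N / d), f (d * m)‖
                ≤ ∑ m ∈ Icc 1 (N / d), ‖f (d * m)‖ := norm_sum_le _ _
              _ ≤ ∑ m ∈ Icc 1 (N / d), 1 := Finset.sum_le_sum fun m _ => hbd _
              _ = ((N / d : ℕ) : ℝ) := by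
                  rw [Finset.sum_const, Nat.card_Icc]; simp
          rw [norm_mul, Complex.norm_real, Real.norm_eq_abs, abs_of_nonneg vonMangoldt_nonneg]
          calc vonMangoldt d * ‖∑ m ∈ Icc 1 (N / d), f (d * m)‖
              ≤ vonMangoldt d * ((N / d : ℕ) : ℝ) :=
                mul_le_mul_of_nonneg_left habs vonMangoldt_nonneg
            _ ≤ vonMangoldt d * (x / d) := by
                apply mul_le_mul_of_nonneg_left _ vonMangoldt_nonneg
                calc ((N / d : ℕ) : ℝ) ≤ (N : ℝ) / d := Nat.cast_div_le
                  _ ≤ x / d := by gcongr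
            _ = x * (vonMangoldt d / (d : ℝ)) := by field_simp
      _ = x * ∑ d ∈ Q, vonMangoldt d / (d : ℝ) := by rw [Finset.mul_sum]
      _ ≤ x * (4 * B0) := by
          apply mul_le_mul_of_nonneg_left _ hx0.le
          exact nonprime_sum_le N
      _ = 4 * B0 * x := by ring
  -- bound for the prime part
  have HB : ‖∑ p ∈ P,
        (((vonMangoldt p : ℝ) : ℂ) * (∑ m ∈ Icc 1 (N / p), f (p * m))
          - ∑ m ∈ Icc 1 (N / p), f m * f p * (Real.log p : ℂ))‖
      ≤ 4 * B0 * x := by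
    calc ‖∑ p ∈ P,
            (((vonMangoldt p : ℝ) : ℂ) * (∑ m ∈ Icc 1 (N / p), f (p * m))
              - ∑ m ∈ Icc 1 (N / p), f m * f p * (Real.log p : ℂ))‖
        ≤ ∑ p ∈ P, ‖((vonMangoldt p : ℝ) : ℂ) * (∑ m ∈ Icc 1 (N / p), f (p * m))
              - ∑ m ∈ Icc 1 (N / p), f m * f p * (Real.log p : ℂ)‖ :=
          norm_sum_le _ _
      _ ≤ ∑ p ∈ P, 2 * x * (Real.log p / (p : ℝ) ^ 2) := by
          apply Finset.sum_le_sum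
          intro p hp
          have hpp : p.Prime := (Finset.mem_filter.mp hp).2
          have hp2 : 2 ≤ p := hpp.two_le
          have hp0 : (0:ℝ) < p := by exact_mod_cast lt_of_lt_of_le two_pos hp2
          have hlog : 0 ≤ Real.log p := Real.log_nonneg (by exact_mod_cast hp2.trans' one_le_two)
          rw [hbrak p hp, norm_mul, Complex.norm_real, Real.norm_eq_abs, abs_of_nonneg hlog]
          have hcast : ((N / p / p : ℕ) : ℝ) ≤ x / (p : ℝ) ^ 2 := by
            rw [Nat.div_div_eq_div_mul]
            calc ((N / (p * p) : ℕ) : ℝ) ≤ (N : ℝ) / ((p : ℕ) * p : ℕ) := Nat.cast_div_le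
              _ = (N : ℝ) / ((p : ℝ) * p) := by push_cast; ring_nf
              _ ≤ x / ((p : ℝ) * p) := by gcongr
              _ = x / (p : ℝ) ^ 2 := by ring_nf
          calc Real.log p * ‖∑ m ∈ Icc 1 (N / p), (f (p * m) - f m * f p)‖
              ≤ Real.log p * (2 * ((N / p / p : ℕ) : ℝ)) :=
                mul_le_mul_of_nonneg_left (hcount p hp) hlog
            _ ≤ Real.log p * (2 * (x / (p : ℝ) ^ 2)) := by
                apply mul_le_mul_of_nonneg_left _ hlog
                linarith
            _ = 2 * x * (Real.log p / (p : ℝ) ^ 2) := by field_simp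
      _ = 2 * x * ∑ p ∈ P, Real.log p / (p : ℝ) ^ 2 := by rw [Finset.mul_sum]
      _ ≤ 2 * x * (2 * B0) := by
          apply mul_le_mul_of_nonneg_left _ (by linarith)
          exact sum_log_div_sq_le P fun p hp => (Finset.mem_filter.mp hp).2.two_le
      _ = 4 * B0 * x := by ring
  -- assemble
  have hsplit : (∑ n ∈ Icc 1 N, f n * (Real.log n : ℂ))
      - (∑ p ∈ primesUpTo x, ∑ m ∈ Icc 1 ⌊x / (p : ℝ)⌋₊, f m * f p * (Real.log p : ℂ))
      = (∑ d ∈ Q, ((vonMangoldt d : ℝ) : ℂ) * ∑ m ∈ Icc 1 (N / d), f (d * m))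
        + ∑ p ∈ P,
            (((vonMangoldt p : ℝ) : ℂ) * (∑ m ∈ Icc 1 (N / p), f (p * m))
              - ∑ m ∈ Icc 1 (N / p), f m * f p * (Real.log p : ℂ)) := by
    rw [E1, hT, E2, Finset.sum_sub_distrib]
    ring
  rw [hsplit]
  calc ‖_‖ ≤ _ + _ := norm_add_le _ _
    _ ≤ 4 * B0 * x + 4 * B0 * x := add_le_add HA HB
    _ ≤ (8 * B0 + 1) * x := by nlinarith [B0_nonneg]
end

section
/- For any x ≥ 2 and any multiplicative function f with |f(n)| ≤ 1, we have S(x) = (1/log x) ∑_{p prime, m ≥ 1, pm ≤ x} f(m) f(p) log p + O(x / log x), where S(x) = ∑_{n ≤ x} f(n). -/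
open Finset MeasureTheory
open scoped Classical BigOperators

noncomputable def Kc : ℝ := ∑' (n : ℕ), ((n:ℝ) ^ ((3:ℝ)/2))⁻¹

lemma Kc_nonneg : 0 ≤ Kc := tsum_nonneg fun n => by positivity

lemma summable_aux : Summable (fun n : ℕ => ((n:ℝ) ^ ((3:ℝ)/2))⁻¹) :=
  Real.summable_nat_rpow_inv.2 (by norm_num)

lemma log_div_sq_le_s2 {n : ℕ} (hn : 2 ≤ n) :
    Real.log n / (n:ℝ)^2 ≤ 2 * ((n:ℝ) ^ ((3:ℝ)/2))⁻¹ := by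
  have ht : (1:ℝ) ≤ (n:ℝ) := by exact_mod_cast Nat.one_le_of_lt hn
  have ht0 : (0:ℝ) < (n:ℝ) := by linarith
  have h1 : Real.log n ≤ 2 * (n:ℝ) ^ ((1:ℝ)/2) := by
    have := Real.log_rpow ht0 ((1:ℝ)/2)
    have h2 : Real.log ((n:ℝ) ^ ((1:ℝ)/2)) ≤ (n:ℝ) ^ ((1:ℝ)/2) - 1 :=
      Real.log_le_sub_one_of_pos (by positivity)
    nlinarith [Real.rpow_nonneg ht0.le ((1:ℝ)/2)]
  have h3 : (n:ℝ) ^ ((1:ℝ)/2) / (n:ℝ)^2 = ((n:ℝ) ^ ((3:ℝ)/2))⁻¹ := by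
    rw [show ((n:ℝ)^2) = (n:ℝ)^((2:ℝ)) from by rw [← Real.rpow_natCast]; norm_num,
      ← Real.rpow_sub ht0, ← Real.rpow_neg ht0.le]
    congr 1
    norm_num
  calc Real.log n / (n:ℝ)^2 ≤ (2 * (n:ℝ) ^ ((1:ℝ)/2)) / (n:ℝ)^2 := by gcongr
    _ = 2 * ((n:ℝ) ^ ((1:ℝ)/2) / (n:ℝ)^2) := by ring
    _ = 2 * ((n:ℝ) ^ ((3:ℝ)/2))⁻¹ := by rw [h3]

lemma sum_log_div_sq_le_s2 (X : ℕ) :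
    ∑ n ∈ Finset.Icc 2 X, Real.log n / (n:ℝ)^2 ≤ 2 * Kc := by
  calc ∑ n ∈ Finset.Icc 2 X, Real.log n / (n:ℝ)^2
      ≤ ∑ n ∈ Finset.Icc 2 X, 2 * ((n:ℝ) ^ ((3:ℝ)/2))⁻¹ := by
        apply Finset.sum_le_sum
        intro n hn
        exact log_div_sq_le_s2 (Finset.mem_Icc.1 hn).1
    _ = 2 * ∑ n ∈ Finset.Icc 2 X, ((n:ℝ) ^ ((3:ℝ)/2))⁻¹ := by rw [Finset.mul_sum]
    _ ≤ 2 * Kc := by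
        unfold Kc
        have := Summable.sum_le_tsum (Finset.Icc 2 X) (fun n _ => by positivity) summable_aux
        linarith

lemma sum_log_lower (X : ℕ) : (X:ℝ) * Real.log X - X ≤ ∑ n ∈ Finset.Icc 1 X, Real.log n := by
  induction X with
  | zero => simp
  | succ X ih =>
    rw [Finset.sum_Icc_succ_top (by omega : 1 ≤ X + 1)]
    have key : ((X+1:ℕ):ℝ) * Real.log (X+1:ℕ) - ((X+1:ℕ):ℝ)
        ≤ ((X:ℝ) * Real.log X - X) + Real.log (X+1:ℕ) := by
      rcases Nat.eq_zero_or_pos X with h|h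
      · subst h; norm_num
      · have hX : (0:ℝ) < X := by exact_mod_cast h
        have h1 : Real.log (((X:ℝ)+1)/X) ≤ ((X:ℝ)+1)/X - 1 :=
          Real.log_le_sub_one_of_pos (by positivity)
        have h2 : Real.log (((X:ℝ)+1)/X) = Real.log ((X:ℝ)+1) - Real.log X :=
          Real.log_div (by positivity) (ne_of_gt hX)
        have h3 : ((X:ℝ)+1)/X - 1 = 1/X := by field_simp; ring
        have h4 : (X:ℝ) * (Real.log ((X:ℝ)+1) - Real.log X) ≤ 1 := by
          rw [← h2]
          calc (X:ℝ) * Real.log (((X:ℝ)+1)/X) ≤ (X:ℝ) * (1/X) := by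
                nlinarith [h1, h3]
            _ = 1 := by field_simp
        push_cast
        nlinarith [h4]
    linarith

lemma divisor_swap (X : ℕ) (g : ℕ → ℕ → ℂ) :
    ∑ n ∈ Finset.Icc 1 X, ∑ d ∈ n.divisors, g d n
      = ∑ d ∈ Finset.Icc 1 X, ∑ m ∈ Finset.Icc 1 (X / d), g d (d * m) := by
  rw [Finset.sum_sigma', Finset.sum_sigma']
  apply Finset.sum_nbij' (i := fun q => (⟨q.2, q.1 / q.2⟩ : (d : ℕ) × ℕ))
    (j := fun q => (⟨q.1 * q.2, q.1⟩ : (n : ℕ) × ℕ))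
  · rintro ⟨n, d⟩ hq
    simp only [Finset.mem_sigma, Finset.mem_Icc, Nat.mem_divisors] at hq ⊢
    obtain ⟨⟨h1, h2⟩, hdvd, hne⟩ := hq
    have hd0 : 0 < d := Nat.pos_of_dvd_of_pos hdvd (by omega)
    have hdn : d ≤ n := Nat.le_of_dvd (by omega) hdvd
    exact ⟨⟨hd0, hdn.trans h2⟩, Nat.one_le_div_iff hd0 |>.2 hdn, Nat.div_le_div_right h2⟩
  · rintro ⟨d, m⟩ hq
    simp only [Finset.mem_sigma, Finset.mem_Icc, Nat.mem_divisors] at hq ⊢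
    obtain ⟨⟨h1, h2⟩, h3, h4⟩ := hq
    have : d * m ≤ X := by
      rw [mul_comm]; exact (Nat.le_div_iff_mul_le (by omega)).1 h4
    exact ⟨⟨Nat.one_le_iff_ne_zero.2 (by positivity), this⟩, Dvd.intro m rfl, by positivity⟩
  · rintro ⟨n, d⟩ hq
    simp only [Finset.mem_sigma, Finset.mem_Icc, Nat.mem_divisors] at hq
    obtain ⟨⟨h1, h2⟩, hdvd, hne⟩ := hq
    simp [Nat.mul_div_cancel' hdvd]
  · rintro ⟨d, m⟩ hq
    simp only [Finset.mem_sigma, Finset.mem_Icc, Nat.mem_divisors] at hq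
    obtain ⟨⟨h1, h2⟩, h3, h4⟩ := hq
    simp [Nat.mul_div_cancel_left _ (by omega : 0 < d)]
  · rintro ⟨n, d⟩ hq
    simp only [Finset.mem_sigma, Finset.mem_Icc, Nat.mem_divisors] at hq
    obtain ⟨⟨h1, h2⟩, hdvd, hne⟩ := hq
    simp [Nat.mul_div_cancel' hdvd]
lemma prime_sum_bound (X : ℕ) :
    ∑ d ∈ (Finset.Icc 1 X).filter Nat.Prime, Real.log d / (d:ℝ)^2 ≤ 2 * Kc := by
  refine le_trans (Finset.sum_le_sum_of_subset_of_nonneg ?_ ?_) (sum_log_div_sq_le_s2 X)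
  · intro d hd
    simp only [Finset.mem_filter, Finset.mem_Icc] at hd ⊢
    exact ⟨hd.2.two_le, hd.1.2⟩
  · intro d hd _
    have h2 : 2 ≤ d := (Finset.mem_Icc.1 hd).1
    have : (1:ℝ) ≤ (d:ℝ) := by exact_mod_cast Nat.one_le_of_lt h2
    have := Real.log_nonneg this
    positivity

lemma pp_point (p k : ℕ) (hp2 : 2 ≤ p) (hk2 : 2 ≤ k) :
    Real.log p / ((p:ℝ)^k) ≤ 4 * Real.log p / (p:ℝ)^2 * (1/2:ℝ)^k := by
  have hlogp : 0 ≤ Real.log p := Real.log_nonneg (by exact_mod_cast Nat.one_le_of_lt hp2)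
  have hp0 : (0:ℝ) < (p:ℝ) := by positivity
  have hnat : (p:ℕ)^2 * 2^k ≤ 4 * p^k := by
    obtain ⟨j, rfl⟩ : ∃ j, k = j + 2 := ⟨k-2, by omega⟩
    have h2p : (2:ℕ)^j ≤ p^j := Nat.pow_le_pow_left hp2 _
    calc p^2 * 2^(j+2) = 4*(2^j * p^2) := by ring
      _ ≤ 4*(p^j*p^2) := by gcongr
      _ = 4 * p^(j+2) := by ring
  have hreal : ((p:ℝ))^2 * 2^k ≤ 4*(p:ℝ)^k := by exact_mod_cast hnat
  rw [div_le_iff₀ (by positivity)]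
  have key : 4 * Real.log p / (p:ℝ)^2 * (1/2:ℝ)^k * (p:ℝ)^k
      = 4*Real.log p * ((p:ℝ)^k/((p:ℝ)^2 * 2^k)) := by
    rw [div_pow, one_pow]
    field_simp
  rw [key]
  have hfrac : 1 ≤ 4 * ((p:ℝ)^k/((p:ℝ)^2*2^k)) := by
    rw [mul_div_assoc']
    rw [le_div_iff₀ (by positivity)]
    linarith
  nlinarith

lemma pp_sum_bound (X : ℕ) :
    ∑ d ∈ (Finset.Icc 1 X).filter (fun d => ¬d.Prime ∧ IsPrimePow d),
      ArithmeticFunction.vonMangoldt d / d ≤ 16 * Kc := by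
  classical
  set F := (Finset.Icc 1 X).filter (fun d => ¬d.Prime ∧ IsPrimePow d) with hF
  set h : ℕ × ℕ → ℝ := fun q => (4 * Real.log q.1 / (q.1:ℝ)^2) * (1/2:ℝ)^q.2 with hh
  set e : ℕ → ℕ × ℕ := fun d => (d.minFac, d.factorization d.minFac) with he
  -- facts about elements of F
  have hfacts : ∀ d ∈ F, d.minFac.Prime ∧ 2 ≤ d.factorization d.minFac ∧
      d.minFac ^ d.factorization d.minFac = d := by
    intro d hd
    simp only [hF, Finset.mem_filter, Finset.mem_Icc] at hd
    obtain ⟨⟨h1, h2⟩, hnp, hpp⟩ := hd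
    have hne1 : d ≠ 1 := hpp.ne_one
    have hp : d.minFac.Prime := Nat.minFac_prime hne1
    have heq : d.minFac ^ d.factorization d.minFac = d := hpp.minFac_pow_factorization_eq
    refine ⟨hp, ?_, heq⟩
    by_contra hk
    interval_cases hk2 : d.factorization d.minFac
    · rw [pow_zero] at heq; exact hne1 heq.symm
    · rw [pow_one] at heq; exact hnp (heq ▸ hp)
  have step1 : ∑ d ∈ F, ArithmeticFunction.vonMangoldt d / d ≤ ∑ d ∈ F, h (e d) := by
    apply Finset.sum_le_sum
    intro d hd
    obtain ⟨hp, hk2, heq⟩ := hfacts d hd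
    have hΛ : ArithmeticFunction.vonMangoldt d = Real.log d.minFac := by
      simp only [hF, Finset.mem_filter] at hd
      rw [ArithmeticFunction.vonMangoldt_apply, if_pos hd.2.2]
    have hdr : ((d.minFac:ℝ))^(d.factorization d.minFac) = (d:ℝ) := by
      exact_mod_cast congrArg (Nat.cast : ℕ → ℝ) heq
    rw [hΛ, ← hdr]
    exact pp_point _ _ hp.two_le hk2
  have step2 : ∑ d ∈ F, h (e d) = ∑ q ∈ F.image e, h q := by
    rw [Finset.sum_image]
    intro d hd d' hd' hee
    obtain ⟨hp, hk2, heq⟩ := hfacts d hd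
    obtain ⟨hp', hk2', heq'⟩ := hfacts d' hd'
    rw [he] at hee
    simp only [Prod.mk.injEq] at hee
    rw [hee.2] at heq
    rw [hee.1] at heq
    exact heq.symm.trans heq'
  have step3 : F.image e ⊆ Finset.Icc 2 X ×ˢ Finset.Icc 0 X := by
    intro q hq
    obtain ⟨d, hd, rfl⟩ := Finset.mem_image.1 hq
    obtain ⟨hp, hk2, heq⟩ := hfacts d hd
    have hdX : d ≤ X := by
      simp only [hF, Finset.mem_filter, Finset.mem_Icc] at hd
      exact hd.1.2
    have hd1 : 1 ≤ d := by
      simp only [hF, Finset.mem_filter, Finset.mem_Icc] at hd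
      exact hd.1.1
    simp only [Finset.mem_product, Finset.mem_Icc, he]
    refine ⟨⟨hp.two_le, ?_⟩, Nat.zero_le _, ?_⟩
    · exact le_trans (Nat.minFac_le (by omega)) hdX
    · calc d.factorization d.minFac ≤ 2 ^ (d.factorization d.minFac) :=
            (Nat.lt_two_pow_self).le
        _ ≤ d.minFac ^ (d.factorization d.minFac) :=
            Nat.pow_le_pow_left hp.two_le _
        _ = d := heq
        _ ≤ X := hdX
  have hnonneg : ∀ q ∈ Finset.Icc 2 X ×ˢ Finset.Icc 0 X, 0 ≤ h q := by
    rintro ⟨a, b⟩ hq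
    simp only [Finset.mem_product, Finset.mem_Icc] at hq
    have : (1:ℝ) ≤ (a:ℝ) := by exact_mod_cast Nat.one_le_of_lt hq.1.1
    have := Real.log_nonneg this
    rw [hh]
    positivity
  have step4 : ∑ q ∈ F.image e, h q ≤ ∑ q ∈ Finset.Icc 2 X ×ˢ Finset.Icc 0 X, h q :=
    Finset.sum_le_sum_of_subset_of_nonneg step3 (fun q hq _ => hnonneg q hq)
  have step5 : ∑ q ∈ Finset.Icc 2 X ×ˢ Finset.Icc 0 X, h q ≤ 16 * Kc := by
    rw [Finset.sum_product]
    have hgeom : ∑ b ∈ Finset.Icc 0 X, (1/2:ℝ)^b ≤ 2 := by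
      rw [← Finset.Ico_add_one_right_eq_Icc, ← Finset.range_eq_Ico]
      exact sum_geometric_two_le _
    have inner : ∀ a ∈ Finset.Icc 2 X,
        ∑ b ∈ Finset.Icc 0 X, h (a, b) ≤ 2 * (4 * Real.log a / (a:ℝ)^2) := by
      intro a ha
      have h2a : 2 ≤ a := (Finset.mem_Icc.1 ha).1
      have hla : 0 ≤ Real.log a :=
        Real.log_nonneg (by exact_mod_cast Nat.one_le_of_lt h2a)
      have hca : 0 ≤ 4 * Real.log a / (a:ℝ)^2 := by positivity
      calc ∑ b ∈ Finset.Icc 0 X, h (a, b)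
          = (4 * Real.log a / (a:ℝ)^2) * ∑ b ∈ Finset.Icc 0 X, (1/2:ℝ)^b := by
            rw [Finset.mul_sum]
        _ ≤ (4 * Real.log a / (a:ℝ)^2) * 2 := by
            exact mul_le_mul_of_nonneg_left hgeom hca
        _ = 2 * (4 * Real.log a / (a:ℝ)^2) := by ring
    calc ∑ a ∈ Finset.Icc 2 X, ∑ b ∈ Finset.Icc 0 X, h (a, b)
        ≤ ∑ a ∈ Finset.Icc 2 X, 2 * (4 * Real.log a / (a:ℝ)^2) :=
          Finset.sum_le_sum inner
      _ = 8 * ∑ a ∈ Finset.Icc 2 X, Real.log a / (a:ℝ)^2 := by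
          rw [Finset.mul_sum]
          apply Finset.sum_congr rfl
          intro a _
          ring
      _ ≤ 8 * (2 * Kc) := by
          have := sum_log_div_sq_le_s2 X
          linarith
      _ = 16 * Kc := by ring
  calc ∑ d ∈ F, ArithmeticFunction.vonMangoldt d / d ≤ ∑ d ∈ F, h (e d) := step1
    _ = ∑ q ∈ F.image e, h q := step2
    _ ≤ ∑ q ∈ Finset.Icc 2 X ×ˢ Finset.Icc 0 X, h q := step4
    _ ≤ 16 * Kc := step5

theorem stmt2 :
    ∃ C : ℝ, 0 < C ∧ ∀ x : ℝ, 2 ≤ x → ∀ f : ℕ → ℂ, f 1 = 1 →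
      (∀ m n : ℕ, Nat.Coprime m n → f (m * n) = f m * f n) →
      (∀ n : ℕ, ‖f n‖ ≤ 1) →
      ‖(∑ n ∈ Finset.Icc 1 ⌊x⌋₊, f n) -
        (1 / (Real.log x : ℂ)) * ∑ p ∈ primesUpTo x, ∑ m ∈ Finset.Icc 1 ⌊x / p⌋₊,
          f m * f p * (Real.log p : ℂ)‖ ≤ C * x / Real.log x := by
  refine ⟨3 + 20 * Kc, by nlinarith [Kc_nonneg], ?_⟩
  intro x hx f hf1 hmul hbd
  have hx0 : (0:ℝ) < x := by linarith
  set X := ⌊x⌋₊ with hXdef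
  have hX2 : 2 ≤ X := Nat.le_floor (by exact_mod_cast hx)
  have hXx : (X:ℝ) ≤ x := Nat.floor_le hx0.le
  have hxX : x < (X:ℝ) + 1 := Nat.lt_floor_add_one x
  have hX0 : (0:ℝ) < (X:ℝ) := by
    have : (2:ℝ) ≤ (X:ℝ) := by exact_mod_cast hX2
    linarith
  have hL : 0 < Real.log x := Real.log_pos (by linarith)
  set T : ℂ := ∑ p ∈ primesUpTo x, ∑ m ∈ Finset.Icc 1 ⌊x / (p:ℝ)⌋₊,
      f m * f p * (Real.log p : ℂ) with hT
  set S : ℂ := ∑ n ∈ Finset.Icc 1 X, f n with hS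
  set Slog : ℂ := ∑ n ∈ Finset.Icc 1 X, f n * (Real.log n : ℂ) with hSlogdef
  -- Error 1
  have E1 :  ‖(Real.log x : ℂ) * S - Slog‖ ≤ 2 * x := by
    have hdiff : (Real.log x:ℂ) * S - Slog
        = ∑ n ∈ Finset.Icc 1 X, f n * ((Real.log x - Real.log n : ℝ) : ℂ) := by
      rw [hS, hSlogdef, Finset.mul_sum, ← Finset.sum_sub_distrib]
      apply Finset.sum_congr rfl
      intro n _
      push_cast
      ring
    rw [hdiff]
    have habs : ∀ n ∈ Finset.Icc 1 X,
         ‖f n * ((Real.log x - Real.log n : ℝ):ℂ)‖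
          ≤ Real.log x - Real.log n := by
      intro n hn
      obtain ⟨h1, h2⟩ := Finset.mem_Icc.1 hn
      have hn0 : (0:ℝ) < (n:ℝ) := by exact_mod_cast h1
      have hnx : (n:ℝ) ≤ x := le_trans (by exact_mod_cast Nat.cast_le.2 h2) hXx
      have hlog : Real.log n ≤ Real.log x := Real.log_le_log hn0 hnx
      rw [norm_mul, Complex.norm_real, Real.norm_eq_abs, abs_of_nonneg (by linarith)]
      calc  ‖f n‖ * (Real.log x - Real.log n)
          ≤ 1 * (Real.log x - Real.log n) :=
            mul_le_mul_of_nonneg_right (hbd n) (by linarith)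
        _ = Real.log x - Real.log n := one_mul _
    have hsum : ∑ n ∈ Finset.Icc 1 X, (Real.log x - Real.log n) ≤ 2 * x := by
      have hcard : (Finset.Icc 1 X).card = X := by
        rw [Nat.card_Icc]
        omega
      have h1 : ∑ n ∈ Finset.Icc 1 X, (Real.log x - Real.log n)
          = (X:ℝ) * Real.log x - ∑ n ∈ Finset.Icc 1 X, Real.log n := by
        rw [Finset.sum_sub_distrib, Finset.sum_const, hcard]
        push_cast
        ring
      have h2 := sum_log_lower X
      have h3 : Real.log x - Real.log X ≤ 1 := by
        rw [← Real.log_div (ne_of_gt hx0) (ne_of_gt hX0)]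
        have h4 : x / (X:ℝ) ≤ 2 := by
          rw [div_le_iff₀ hX0]
          have : (1:ℝ) ≤ (X:ℝ) := by linarith
          linarith
        have := Real.log_le_sub_one_of_pos (show (0:ℝ) < x / X by positivity)
        linarith
      have h5 : (X:ℝ) * (Real.log x - Real.log X) ≤ (X:ℝ) := by
        nlinarith [hX0, h3]
      rw [h1]
      nlinarith [hXx, hX0]
    calc  ‖∑ n ∈ Finset.Icc 1 X, f n * ((Real.log x - Real.log n : ℝ) : ℂ)‖
        ≤ ∑ n ∈ Finset.Icc 1 X,
             ‖f n * ((Real.log x - Real.log n : ℝ) : ℂ)‖ :=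
          norm_sum_le _ _
      _ ≤ ∑ n ∈ Finset.Icc 1 X, (Real.log x - Real.log n) := Finset.sum_le_sum habs
      _ ≤ 2 * x := hsum
  have E2 :  ‖Slog - T‖ ≤ 20 * Kc * x := by
    classical
    set Λ := ArithmeticFunction.vonMangoldt with hΛdef
    have hSlog2 : Slog = ∑ d ∈ Finset.Icc 1 X, ∑ m ∈ Finset.Icc 1 (X / d),
        ((Λ d : ℝ) : ℂ) * f (d * m) := by
      rw [hSlogdef]
      rw [show (∑ n ∈ Finset.Icc 1 X, f n * (Real.log n : ℂ))
          = ∑ n ∈ Finset.Icc 1 X, ∑ d ∈ n.divisors, ((Λ d : ℝ):ℂ) * f n from ?_]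
      · exact divisor_swap X (fun d n => ((Λ d : ℝ):ℂ) * f n)
      · apply Finset.sum_congr rfl
        intro n _
        rw [← Finset.sum_mul]
        have hvs : (∑ d ∈ n.divisors, ((Λ d : ℝ):ℂ)) = ((Real.log n : ℝ) : ℂ) := by
          exact_mod_cast congrArg (fun r : ℝ => (r:ℂ)) (ArithmeticFunction.vonMangoldt_sum (n := n))
        rw [hvs]
        ring
    have hT2 : T = ∑ d ∈ Finset.Icc 1 X,
        (if d.Prime then ∑ m ∈ Finset.Icc 1 (X / d), f m * f d * (Real.log d : ℂ) else 0) := by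
      rw [hT]
      unfold primesUpTo
      rw [Finset.sum_filter]
      apply Finset.sum_congr rfl
      intro d _
      by_cases hp : d.Prime
      · rw [if_pos hp, if_pos hp, Nat.floor_div_natCast]
      · rw [if_neg hp, if_neg hp]
    set u : ℕ → ℝ := fun d => if d.Prime then 2 * x * Real.log d / (d:ℝ)^2
        else (if IsPrimePow d then x * (Λ d : ℝ) / d else 0) with hu
    have hptwise : ∀ d ∈ Finset.Icc 1 X,
         ‖(∑ m ∈ Finset.Icc 1 (X / d), ((Λ d : ℝ) : ℂ) * f (d * m))
          - (if d.Prime then ∑ m ∈ Finset.Icc 1 (X / d), f m * f d * (Real.log d : ℂ) else 0)‖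
        ≤ u d := by
      intro d hd
      obtain ⟨hd1, hdX⟩ := Finset.mem_Icc.1 hd
      have hd0 : (0:ℝ) < (d:ℝ) := by exact_mod_cast hd1
      set M := X / d with hM
      have hMle : ((M:ℕ):ℝ) ≤ x / d := by
        calc ((M:ℕ):ℝ) ≤ (X:ℝ) / d := Nat.cast_div_le
          _ ≤ x / d := by gcongr
      by_cases hp : d.Prime
      · -- prime case
        have hd2 : (2:ℝ) ≤ (d:ℝ) := by exact_mod_cast hp.two_le
        have hlog0 : 0 ≤ Real.log d := Real.log_nonneg (by linarith)
        have hΛp : (Λ d : ℝ) = Real.log d := ArithmeticFunction.vonMangoldt_apply_prime hp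
        rw [if_pos hp]
        have hcomb : (∑ m ∈ Finset.Icc 1 M, ((Λ d : ℝ) : ℂ) * f (d * m))
            - ∑ m ∈ Finset.Icc 1 M, f m * f d * (Real.log d : ℂ)
            = ((Real.log d : ℝ) : ℂ) * ∑ m ∈ Finset.Icc 1 M, (f (d * m) - f m * f d) := by
          rw [Finset.mul_sum, ← Finset.sum_sub_distrib]
          apply Finset.sum_congr rfl
          intro m _
          rw [hΛp]
          ring
        rw [hcomb, norm_mul, Complex.norm_real, Real.norm_eq_abs, abs_of_nonneg hlog0]
        have hsplit : ∑ m ∈ Finset.Icc 1 M, (f (d * m) - f m * f d)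
            = ∑ m ∈ (Finset.Icc 1 M).filter (fun m => d ∣ m), (f (d * m) - f m * f d) := by
          rw [← Finset.sum_filter_add_sum_filter_not (Finset.Icc 1 M) (fun m => d ∣ m)]
          have : ∑ m ∈ (Finset.Icc 1 M).filter (fun m => ¬ d ∣ m), (f (d * m) - f m * f d) = 0 := by
            apply Finset.sum_eq_zero
            intro m hm
            have hnd : ¬ d ∣ m := (Finset.mem_filter.1 hm).2
            have hcop : Nat.Coprime d m := (Nat.Prime.coprime_iff_not_dvd hp).2 hnd
            rw [hmul d m hcop]
            ring
          rw [this, add_zero]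
        have hcard : ((Finset.Icc 1 M).filter (fun m => d ∣ m)).card = M / d := by
          rw [show Finset.Icc 1 M = Finset.Ioc 0 M from Finset.Icc_add_one_left_eq_Ioc 0 M]
          exact Nat.Ioc_filter_dvd_card_eq_div M d
        have hinner :  ‖∑ m ∈ Finset.Icc 1 M, (f (d * m) - f m * f d)‖
            ≤ 2 * ((M / d : ℕ) : ℝ) := by
          rw [hsplit]
          calc  ‖∑ m ∈ (Finset.Icc 1 M).filter (fun m => d ∣ m), (f (d * m) - f m * f d)‖
              ≤ ∑ m ∈ (Finset.Icc 1 M).filter (fun m => d ∣ m),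
                   ‖f (d * m) - f m * f d‖ := norm_sum_le _ _
            _ ≤ ∑ m ∈ (Finset.Icc 1 M).filter (fun m => d ∣ m), 2 := by
                apply Finset.sum_le_sum
                intro m _
                calc  ‖f (d * m) - f m * f d‖
                    ≤  ‖f (d * m)‖ +  ‖f m * f d‖ :=
                      norm_sub_le _ _
                  _ ≤ 1 + 1 * 1 := by
                      rw [norm_mul]
                      gcongr <;> [exact hbd _; exact hbd _; exact hbd _]
                  _ = 2 := by norm_num
            _ = 2 * ((M / d : ℕ) : ℝ) := by
                rw [Finset.sum_const, hcard]
                push_cast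
                ring
        have hMd : ((M / d : ℕ) : ℝ) ≤ x / ((d:ℝ) * d) := by
          rw [hM, Nat.div_div_eq_div_mul]
          calc ((X / (d * d) : ℕ) : ℝ) ≤ (X:ℝ) / ((d:ℝ) * d) := by
                push_cast [Nat.cast_div_le]
                exact_mod_cast Nat.cast_div_le
            _ ≤ x / ((d:ℝ) * d) := by gcongr
        have hub : u d = 2 * x * Real.log d / (d:ℝ)^2 := by rw [hu]; simp [hp]
        rw [hub]
        calc Real.log d *  ‖∑ m ∈ Finset.Icc 1 M, (f (d * m) - f m * f d)‖
            ≤ Real.log d * (2 * ((M / d : ℕ) : ℝ)) :=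
              mul_le_mul_of_nonneg_left hinner hlog0
          _ ≤ Real.log d * (2 * (x / ((d:ℝ) * d))) := by gcongr
          _ = 2 * x * Real.log d / (d:ℝ)^2 := by
              field_simp
      · rw [if_neg hp, sub_zero]
        by_cases hpp : IsPrimePow d
        · have hΛ0 : 0 ≤ (Λ d : ℝ) := ArithmeticFunction.vonMangoldt_nonneg
          have hub : u d = x * (Λ d : ℝ) / d := by rw [hu]; simp [hp, hpp]
          rw [hub, ← Finset.mul_sum, norm_mul, Complex.norm_real, Real.norm_eq_abs, abs_of_nonneg hΛ0]
          have hinner :  ‖∑ m ∈ Finset.Icc 1 M, f (d * m)‖ ≤ ((M:ℕ):ℝ) := by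
            calc  ‖∑ m ∈ Finset.Icc 1 M, f (d * m)‖
                ≤ ∑ m ∈ Finset.Icc 1 M,  ‖f (d * m)‖ := norm_sum_le _ _
              _ ≤ ∑ m ∈ Finset.Icc 1 M, 1 := Finset.sum_le_sum (fun m _ => hbd _)
              _ = ((M:ℕ):ℝ) := by
                  rw [Finset.sum_const, Nat.card_Icc]
                  simp
          calc (Λ d : ℝ) *  ‖∑ m ∈ Finset.Icc 1 M, f (d * m)‖
              ≤ (Λ d : ℝ) * (x / d) := by
                apply mul_le_mul_of_nonneg_left (le_trans hinner hMle) hΛ0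
            _ = x * (Λ d : ℝ) / d := by ring
        · have hΛ0 : (Λ d : ℝ) = 0 := ArithmeticFunction.vonMangoldt_eq_zero_iff.2 hpp
          have hub : u d = 0 := by rw [hu]; simp [hp, hpp]
          rw [hub, hΛ0]
          simp
    have husum : ∑ d ∈ Finset.Icc 1 X, u d ≤ 20 * Kc * x := by
      have hsplitu : ∀ d, u d = (if d.Prime then 2 * x * Real.log d / (d:ℝ)^2 else 0)
          + (if (¬d.Prime ∧ IsPrimePow d) then x * (Λ d : ℝ) / d else 0) := by
        intro d
        by_cases h : d.Prime <;> by_cases h' : IsPrimePow d <;> simp [hu, h, h']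
      calc ∑ d ∈ Finset.Icc 1 X, u d
          = (∑ d ∈ Finset.Icc 1 X, if d.Prime then 2 * x * Real.log d / (d:ℝ)^2 else 0)
            + ∑ d ∈ Finset.Icc 1 X, if (¬d.Prime ∧ IsPrimePow d) then x * (Λ d : ℝ) / d else 0 := by
            rw [← Finset.sum_add_distrib]
            exact Finset.sum_congr rfl (fun d _ => hsplitu d)
        _ = (∑ d ∈ (Finset.Icc 1 X).filter Nat.Prime, 2 * x * Real.log d / (d:ℝ)^2)
            + ∑ d ∈ (Finset.Icc 1 X).filter (fun d => ¬d.Prime ∧ IsPrimePow d), x * (Λ d : ℝ) / d := by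
            rw [Finset.sum_filter, Finset.sum_filter]
        _ ≤ 2 * x * (2 * Kc) + x * (16 * Kc) := by
            have hp1 : ∑ d ∈ (Finset.Icc 1 X).filter Nat.Prime, 2 * x * Real.log d / (d:ℝ)^2
                = 2 * x * ∑ d ∈ (Finset.Icc 1 X).filter Nat.Prime, Real.log d / (d:ℝ)^2 := by
              rw [Finset.mul_sum]
              exact Finset.sum_congr rfl (fun d _ => by ring)
            have hp2 : ∑ d ∈ (Finset.Icc 1 X).filter (fun d => ¬d.Prime ∧ IsPrimePow d),
                x * (Λ d : ℝ) / d
                = x * ∑ d ∈ (Finset.Icc 1 X).filter (fun d => ¬d.Prime ∧ IsPrimePow d),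
                    (Λ d : ℝ) / d := by
              rw [Finset.mul_sum]
              exact Finset.sum_congr rfl (fun d _ => by ring)
            rw [hp1, hp2]
            have b1 := prime_sum_bound X
            have b2 := pp_sum_bound X
            have hx0' : (0:ℝ) ≤ x := hx0.le
            have h2x : (0:ℝ) ≤ 2 * x := by linarith
            gcongr
        _ = 20 * Kc * x := by ring
    rw [hSlog2, hT2, ← Finset.sum_sub_distrib]
    calc  ‖∑ d ∈ Finset.Icc 1 X,
          ((∑ m ∈ Finset.Icc 1 (X / d), ((Λ d : ℝ) : ℂ) * f (d * m))
          - (if d.Prime then ∑ m ∈ Finset.Icc 1 (X / d), f m * f d * (Real.log d : ℂ) else 0))‖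
        ≤ ∑ d ∈ Finset.Icc 1 X, 
          ‖(∑ m ∈ Finset.Icc 1 (X / d), ((Λ d : ℝ) : ℂ) * f (d * m))
          - (if d.Prime then ∑ m ∈ Finset.Icc 1 (X / d), f m * f d * (Real.log d : ℂ) else 0)‖ :=
          norm_sum_le _ _
      _ ≤ ∑ d ∈ Finset.Icc 1 X, u d := Finset.sum_le_sum hptwise
      _ ≤ 20 * Kc * x := husum
  have main :  ‖(Real.log x : ℂ) * S - T‖ ≤ (3 + 20 * Kc) * x := by
    calc  ‖(Real.log x : ℂ) * S - T‖
        =  ‖((Real.log x : ℂ) * S - Slog) + (Slog - T)‖ := by ring_nf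
      _ ≤  ‖(Real.log x : ℂ) * S - Slog‖ +  ‖Slog - T‖ :=
          norm_add_le _ _
      _ ≤ 2 * x + 20 * Kc * x := by linarith
      _ ≤ (3 + 20 * Kc) * x := by nlinarith [Kc_nonneg, hx0]
  have hLne : (Real.log x : ℂ) ≠ 0 := by
    exact_mod_cast Complex.ofReal_ne_zero.2 (ne_of_gt hL)
  have hred : S - (1 / (Real.log x : ℂ)) * T
      = (1 / (Real.log x : ℂ)) * ((Real.log x : ℂ) * S - T) := by
    field_simp
  rw [hred, norm_mul]
  have habs :  ‖1 / (Real.log x : ℂ)‖ = 1 / Real.log x := by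
    rw [norm_div, norm_one, Complex.norm_real, Real.norm_eq_abs, abs_of_pos hL]
  rw [habs]
  calc (1 / Real.log x) *  ‖(Real.log x : ℂ) * S - T‖
      ≤ (1 / Real.log x) * ((3 + 20 * Kc) * x) :=
        mul_le_mul_of_nonneg_left main (by positivity)
    _ = (3 + 20 * Kc) * x / Real.log x := by ring
end

section
/- Let f be multiplicative with |f(n)| ≤ 1, x ≥ 16, and for an integer k ≥ 1 let P_k be the set of primes p with (log x)^4 < p ≤ x/2 and x^{1-e^{1-k}} < p ≤ x^{1-e^{-k}}. Then |S_k(x)| ≤ ∑_{p ∈ P_k} ∑_{q prime, pq ≤ x} ((log p)(log q)/log(x/p)) · ⌊x/(pq)⌋ ≪ e^{-k} x log x, where S_k(x) = ∑_{pqn ≤ x, p ∈ P_k} (f(p) log p / log(x/p)) f(n) f(q) log q and the implied constant is absolute. -/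
open Finset MeasureTheory
open scoped Classical BigOperators

/-- weighted prime indicator -/
noncomputable def gw (p : ℕ) : ℝ := if p.Prime then Real.log p / p else 0

lemma gw_nonneg (p : ℕ) : 0 ≤ gw p := by
  unfold gw
  split
  · next h => exact div_nonneg (Real.log_nonneg (by exact_mod_cast h.one_lt.le)) (by positivity)
  · exact le_refl 0

lemma theta_le (n : ℕ) :
    ∑ p ∈ (Finset.range (n+1)).filter Nat.Prime, Real.log p ≤ n * Real.log 4 := by
  have h1 : Real.log (primorial n) ≤ Real.log (4 ^ n) :=
    Real.log_le_log (by exact_mod_cast primorial_pos n) (by exact_mod_cast primorial_le_4_pow n)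
  have h2 : Real.log ((primorial n : ℕ) : ℝ)
      = ∑ p ∈ (Finset.range (n+1)).filter Nat.Prime, Real.log p := by
    rw [primorial]
    push_cast
    exact Real.log_prod (fun p hp => by
      have := (Finset.mem_filter.mp hp).2.pos
      positivity)
  rw [h2] at h1
  calc ∑ p ∈ (Finset.range (n+1)).filter Nat.Prime, Real.log p
      ≤ Real.log (4 ^ n) := h1
    _ = n * Real.log 4 := by rw [Real.log_pow]

lemma ite_log_nonneg (p : ℕ) : 0 ≤ if p.Prime then Real.log p else 0 := by
  split
  · next h => exact Real.log_nonneg (by exact_mod_cast h.one_lt.le)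
  · exact le_refl 0

lemma dyadic_step (a : ℕ) (ha : 1 ≤ a) :
    ∑ p ∈ Finset.Ioc a (2*a), gw p ≤ 2 * Real.log 4 := by
  have ha' : (0:ℝ) < a := by exact_mod_cast ha
  have step1 : ∀ p ∈ Finset.Ioc a (2*a), gw p ≤ (if p.Prime then Real.log p else 0) / a := by
    intro p hp
    have hpa := (Finset.mem_Ioc.mp hp).1
    unfold gw
    split
    · next h =>
      apply div_le_div_of_nonneg_left (Real.log_nonneg (by exact_mod_cast h.one_lt.le)) ha'
      exact_mod_cast hpa.le
    · simp
  have step2 : (∑ p ∈ Finset.Ioc a (2*a), if p.Prime then Real.log p else 0)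
      ≤ 2 * a * Real.log 4 := by
    calc (∑ p ∈ Finset.Ioc a (2*a), if p.Prime then Real.log p else 0)
        ≤ ∑ p ∈ Finset.range (2*a+1), (if p.Prime then Real.log p else 0) := by
          apply Finset.sum_le_sum_of_subset_of_nonneg
          · intro p hp
            have := (Finset.mem_Ioc.mp hp).2
            exact Finset.mem_range.mpr (by omega)
          · intro p _ _; exact ite_log_nonneg p
      _ = ∑ p ∈ (Finset.range (2*a+1)).filter Nat.Prime, Real.log p := by
          rw [Finset.sum_filter]
      _ ≤ ((2*a : ℕ) : ℝ) * Real.log 4 := theta_le (2*a)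
      _ = 2 * a * Real.log 4 := by push_cast; ring
  calc ∑ p ∈ Finset.Ioc a (2*a), gw p
      ≤ ∑ p ∈ Finset.Ioc a (2*a), (if p.Prime then Real.log p else 0) / a :=
        Finset.sum_le_sum step1
    _ = (∑ p ∈ Finset.Ioc a (2*a), if p.Prime then Real.log p else 0) / a := by
        rw [Finset.sum_div]
    _ ≤ (2 * a * Real.log 4) / a := by gcongr
    _ = 2 * Real.log 4 := by field_simp

lemma dyadic_sum (J : ℕ) : ∀ a : ℕ, 1 ≤ a →
    ∑ p ∈ Finset.Ioc a (2^J * a), gw p ≤ J * (2 * Real.log 4) := by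
  induction J with
  | zero => intro a ha; simp
  | succ J ih =>
    intro a ha
    have h1 : a ≤ 2^J * a := Nat.le_mul_of_pos_left a (Nat.pow_pos (by norm_num))
    have h2 : 2^J * a ≤ 2^(J+1) * a := by
      apply Nat.mul_le_mul_right
      exact Nat.pow_le_pow_right (by norm_num) (by omega)
    rw [← Finset.sum_Ioc_consecutive gw h1 h2]
    have h3 : ∑ p ∈ Finset.Ioc (2^J * a) (2^(J+1) * a), gw p ≤ 2 * Real.log 4 := by
      have := dyadic_step (2^J * a) (by exact Nat.one_le_iff_ne_zero.mpr (by positivity))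
      have he : 2 * (2^J * a) = 2^(J+1) * a := by ring
      rwa [he] at this
    have h4 := ih a ha
    push_cast
    linarith

lemma mertens_interval {a b : ℝ} (ha : 1 ≤ a) (hab : a ≤ b) (s : Finset ℕ)
    (hs : ∀ p ∈ s, Nat.Prime p ∧ a < (p : ℝ) ∧ (p : ℝ) ≤ b) :
    ∑ p ∈ s, Real.log p / p ≤ (Real.log (b/a) / Real.log 2 + 2) * (2 * Real.log 4) := by
  have ha0 : (0:ℝ) < a := by linarith
  have hb0 : (0:ℝ) < b := by linarith
  set A : ℕ := ⌊a⌋₊ with hA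
  have hA1 : 1 ≤ A := Nat.le_floor (by exact_mod_cast ha)
  have hA2 : a / 2 ≤ (A : ℝ) := by
    rcases le_or_gt 2 a with h | h
    · have := Nat.sub_one_lt_floor a
      linarith
    · have : (1:ℝ) ≤ A := by exact_mod_cast hA1
      linarith
  have hAa : (A : ℝ) ≤ a := Nat.floor_le ha0.le
  set J : ℕ := ⌈Real.logb 2 (2*b/a)⌉₊ with hJ
  have hba1 : (1:ℝ) ≤ b / a := (one_le_div ha0).mpr hab
  have h2ba : (2:ℝ) ≤ 2*b/a := by
    rw [mul_div_assoc]; linarith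
  have h2J : 2*b/a ≤ (2:ℝ)^J := by
    calc 2*b/a = (2:ℝ) ^ Real.logb 2 (2*b/a) :=
          (Real.rpow_logb (by norm_num) (by norm_num) (by linarith)).symm
      _ ≤ (2:ℝ) ^ ((J : ℕ) : ℝ) :=
          Real.rpow_le_rpow_of_exponent_le (by norm_num) (Nat.le_ceil _)
      _ = (2:ℝ)^J := by rw [Real.rpow_natCast]
  have hsub : s ⊆ Finset.Ioc A (2^J * A) := by
    intro p hp
    obtain ⟨hpp, hpa, hpb⟩ := hs p hp
    rw [Finset.mem_Ioc]
    constructor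
    · have : (A : ℝ) < p := lt_of_le_of_lt hAa hpa
      exact_mod_cast this
    · have : (p : ℝ) ≤ ((2^J * A : ℕ) : ℝ) := by
        push_cast
        calc (p:ℝ) ≤ b := hpb
          _ = (2*b/a) * (a/2) := by field_simp
          _ ≤ (2:ℝ)^J * A := by
              apply mul_le_mul h2J hA2 (by linarith) (by positivity)
      exact_mod_cast this
  have hJle : (J : ℝ) ≤ Real.log (b/a) / Real.log 2 + 2 := by
    have h0 : 0 ≤ Real.logb 2 (2*b/a) := Real.logb_nonneg (by norm_num) (by linarith)
    have h1 : (J : ℝ) < Real.logb 2 (2*b/a) + 1 := Nat.ceil_lt_add_one h0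
    have h2 : Real.logb 2 (2*b/a) = 1 + Real.log (b/a) / Real.log 2 := by
      have hl2 : Real.log 2 ≠ 0 := ne_of_gt (Real.log_pos (by norm_num))
      rw [mul_div_assoc, Real.logb, Real.log_mul two_ne_zero (ne_of_gt (by positivity)),
        add_div, div_self hl2]
    rw [h2] at h1
    linarith
  have hgw : ∀ p ∈ s, Real.log p / p = gw p := by
    intro p hp
    unfold gw
    rw [if_pos (hs p hp).1]
  calc ∑ p ∈ s, Real.log p / p = ∑ p ∈ s, gw p := Finset.sum_congr rfl hgw
    _ ≤ ∑ p ∈ Finset.Ioc A (2^J * A), gw p :=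
        Finset.sum_le_sum_of_subset_of_nonneg hsub (fun p _ _ => gw_nonneg p)
    _ ≤ J * (2 * Real.log 4) := dyadic_sum J A hA1
    _ ≤ (Real.log (b/a) / Real.log 2 + 2) * (2 * Real.log 4) := by
        apply mul_le_mul_of_nonneg_right hJle
        positivity

lemma log_four : Real.log 4 = 2 * Real.log 2 := by
  rw [show (4:ℝ) = 2^2 by norm_num, Real.log_pow]
  push_cast; ring

lemma mertens_upTo {y : ℝ} (hy : 2 ≤ y) :
    ∑ q ∈ primesUpTo y, Real.log q / q ≤ 12 * Real.log y := by
  have h2 : Real.log 2 ≤ Real.log y := Real.log_le_log (by norm_num) hy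
  have hl2 : (0:ℝ) < Real.log 2 := Real.log_pos (by norm_num)
  have key := mertens_interval (a := 1) (b := y) le_rfl (by linarith) (primesUpTo y) ?_
  · calc ∑ q ∈ primesUpTo y, Real.log q / q
        ≤ (Real.log (y/1) / Real.log 2 + 2) * (2 * Real.log 4) := key
      _ = 4 * Real.log y + 8 * Real.log 2 := by
          rw [div_one, log_four]; field_simp; ring
      _ ≤ 12 * Real.log y := by linarith
  · intro q hq
    simp only [primesUpTo, Finset.mem_filter, Finset.mem_Icc] at hq
    refine ⟨hq.2, by exact_mod_cast hq.2.one_lt, ?_⟩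
    calc (q:ℝ) ≤ (⌊y⌋₊ : ℝ) := by exact_mod_cast hq.1.2
      _ ≤ y := Nat.floor_le (by linarith)

theorem stmt6 :
    ∃ C : ℝ, 0 < C ∧ ∀ x : ℝ, 16 ≤ x → ∀ k : ℕ, 1 ≤ k →
      ∀ f : ℕ → ℂ, f 1 = 1 →
      (∀ m n : ℕ, Nat.Coprime m n → f (m * n) = f m * f n) →
      (∀ n : ℕ, ‖f n‖ ≤ 1) →
      ‖Sk f x k‖ ≤
        (∑ p ∈ Pk x k, ∑ q ∈ primesUpTo (x / p),
          (Real.log p * Real.log q / Real.log (x / p)) * (⌊x / (p * q)⌋₊ : ℝ)) ∧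
      (∑ p ∈ Pk x k, ∑ q ∈ primesUpTo (x / p),
          (Real.log p * Real.log q / Real.log (x / p)) * (⌊x / (p * q)⌋₊ : ℝ))
        ≤ C * Real.exp (-(k : ℝ)) * x * Real.log x := by
  refine ⟨348, by norm_num, ?_⟩
  intro x hx k hk f hf1 hfmul hfb
  have hx0 : (0:ℝ) < x := by linarith
  have hx1 : (1:ℝ) < x := by linarith
  have hlogx : 0 < Real.log x := Real.log_pos hx1
  have hl2 : (0:ℝ) < Real.log 2 := Real.log_pos (by norm_num)
  -- membership facts for Pk
  have hPk : ∀ p ∈ Pk x k, p.Prime ∧ (Real.log x) ^ 4 < (p : ℝ) ∧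
      (p : ℝ) ≤ x / 2 ∧ x ^ (1 - Real.exp (1 - (k : ℝ))) < (p : ℝ) ∧
      (p : ℝ) ≤ x ^ (1 - Real.exp (-(k : ℝ))) := by
    intro p hp
    exact (Finset.mem_filter.mp hp).2
  -- facts per p
  have hfacts : ∀ p ∈ Pk x k, (0:ℝ) < p ∧ 0 ≤ Real.log p ∧ (2:ℝ) ≤ x / p ∧
      0 < Real.log (x / p) := by
    intro p hp
    obtain ⟨hpp, _, hpx2, _, _⟩ := hPk p hp
    have hp0 : (0:ℝ) < p := by exact_mod_cast hpp.pos
    have hp1 : (1:ℝ) ≤ p := by exact_mod_cast hpp.one_lt.le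
    have h2 : (2:ℝ) ≤ x / p := by
      rw [le_div_iff₀ hp0]; linarith
    exact ⟨hp0, Real.log_nonneg hp1, h2, Real.log_pos (by linarith)⟩
  -- facts per q
  have hqfacts : ∀ (y : ℝ), 0 ≤ y → ∀ q ∈ primesUpTo y, q.Prime ∧ (0:ℝ) < q ∧
      0 ≤ Real.log q ∧ (q:ℝ) ≤ y := by
    intro y hy q hq
    simp only [primesUpTo, Finset.mem_filter, Finset.mem_Icc] at hq
    refine ⟨hq.2, by exact_mod_cast hq.2.pos, Real.log_nonneg (by exact_mod_cast hq.2.one_lt.le), ?_⟩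
    calc (q:ℝ) ≤ (⌊y⌋₊ : ℝ) := by exact_mod_cast hq.1.2
      _ ≤ y := Nat.floor_le hy
  constructor
  · -- part 1: triangle inequality
    have step1 : ‖Sk f x k‖ ≤
        ∑ p ∈ Pk x k, ∑ q ∈ primesUpTo (x / p), ∑ n ∈ Finset.Icc 1 ⌊x / (p * q)⌋₊,
          ‖(f p * (Real.log p : ℂ) / (Real.log (x / p) : ℂ)) * f n * f q *
            (Real.log q : ℂ)‖ := by
      refine (norm_sum_le _ _).trans (Finset.sum_le_sum fun p _ => ?_)
      refine (norm_sum_le _ _).trans (Finset.sum_le_sum fun q _ => ?_)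
      exact norm_sum_le _ _
    refine step1.trans (Finset.sum_le_sum fun p hp => Finset.sum_le_sum fun q hq => ?_)
    obtain ⟨hp0, hLp, hxp2, hL⟩ := hfacts p hp
    obtain ⟨hqp, hq0, hLq, hqy⟩ := hqfacts (x / p) (by positivity) q hq
    have hterm : ∀ n ∈ Finset.Icc 1 ⌊x / (p * q)⌋₊,
        ‖(f p * (Real.log p : ℂ) / (Real.log (x / p) : ℂ)) * f n * f q *
          (Real.log q : ℂ)‖ ≤ Real.log p * Real.log q / Real.log (x / p) := by
      intro n _
      have heq : ‖(f p * (Real.log p : ℂ) / (Real.log (x / p) : ℂ)) * f n * f q *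
            (Real.log q : ℂ)‖ =
          ‖f p‖ * Real.log p / Real.log (x / p) * ‖f n‖ *
            ‖f q‖ * Real.log q := by
        simp only [norm_mul, norm_div, Complex.norm_real, Real.norm_eq_abs, abs_of_nonneg hLp,
          abs_of_nonneg hL.le, abs_of_nonneg hLq]
      rw [heq]
      have h1 : ‖f p‖ * Real.log p / Real.log (x / p) * ‖f n‖ *
          ‖f q‖ * Real.log q ≤
          1 * Real.log p / Real.log (x / p) * 1 * 1 * Real.log q := by
        gcongr <;> first
          | exact hfb _
          | positivity
      refine h1.trans (le_of_eq ?_)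
      ring
    calc ∑ n ∈ Finset.Icc 1 ⌊x / (p * q)⌋₊,
          ‖(f p * (Real.log p : ℂ) / (Real.log (x / p) : ℂ)) * f n * f q *
            (Real.log q : ℂ)‖
        ≤ ∑ _n ∈ Finset.Icc 1 ⌊x / (p * q)⌋₊, Real.log p * Real.log q / Real.log (x / p) :=
          Finset.sum_le_sum hterm
      _ = (⌊x / (p * q)⌋₊ : ℝ) * (Real.log p * Real.log q / Real.log (x / p)) := by
          rw [Finset.sum_const, Nat.card_Icc]
          simp [nsmul_eq_mul]
      _ = (Real.log p * Real.log q / Real.log (x / p)) * (⌊x / (p * q)⌋₊ : ℝ) := by ring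
  · -- part 2: quantitative bound
    rcases Finset.eq_empty_or_nonempty (Pk x k) with hPe | hPne
    · rw [hPe]
      simp only [Finset.sum_empty]
      positivity
    -- inner sum bound per p
    have inner_bound : ∀ p ∈ Pk x k,
        ∑ q ∈ primesUpTo (x / p),
          (Real.log p * Real.log q / Real.log (x / p)) * (⌊x / (p * q)⌋₊ : ℝ)
          ≤ 12 * x * (Real.log p / p) := by
      intro p hp
      obtain ⟨hp0, hLp, hxp2, hL⟩ := hfacts p hp
      have hmer := mertens_upTo hxp2
      calc ∑ q ∈ primesUpTo (x / p),
            (Real.log p * Real.log q / Real.log (x / p)) * (⌊x / (p * q)⌋₊ : ℝ)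
          ≤ ∑ q ∈ primesUpTo (x / p),
            (x * Real.log p / (p * Real.log (x / p))) * (Real.log q / q) := by
            refine Finset.sum_le_sum fun q hq => ?_
            obtain ⟨hqp, hq0, hLq, hqy⟩ := hqfacts (x / p) (by positivity) q hq
            have hfl : (⌊x / (p * q)⌋₊ : ℝ) ≤ x / (p * q) := Nat.floor_le (by positivity)
            calc (Real.log p * Real.log q / Real.log (x / p)) * (⌊x / (p * q)⌋₊ : ℝ)
                ≤ (Real.log p * Real.log q / Real.log (x / p)) * (x / (p * q)) := by
                  apply mul_le_mul_of_nonneg_left hfl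
                  positivity
              _ = (x * Real.log p / (p * Real.log (x / p))) * (Real.log q / q) := by
                  field_simp
        _ = (x * Real.log p / (p * Real.log (x / p))) *
              ∑ q ∈ primesUpTo (x / p), Real.log q / q := by
            rw [Finset.mul_sum]
        _ ≤ (x * Real.log p / (p * Real.log (x / p))) * (12 * Real.log (x / p)) := by
            apply mul_le_mul_of_nonneg_left hmer
            positivity
        _ = 12 * x * (Real.log p / p) := by
            field_simp
    -- Mertens over Pk
    set a : ℝ := x ^ (1 - Real.exp (1 - (k : ℝ))) with ha_def
    set b : ℝ := x ^ (1 - Real.exp (-(k : ℝ))) with hb_def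
    have hexp1 : Real.exp (1 - (k:ℝ)) ≤ 1 := by
      rw [Real.exp_le_one_iff]
      have : (1:ℝ) ≤ k := by exact_mod_cast hk
      linarith
    have ha1 : (1:ℝ) ≤ a := Real.one_le_rpow hx1.le (by linarith)
    have hab : a ≤ b := by
      apply Real.rpow_le_rpow_of_exponent_le hx1.le
      have : Real.exp (-(k:ℝ)) ≤ Real.exp (1 - (k:ℝ)) := Real.exp_le_exp.mpr (by linarith)
      linarith
    have hloga : Real.log a = (1 - Real.exp (1 - (k:ℝ))) * Real.log x :=
      Real.log_rpow hx0 _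
    have hlogb : Real.log b = (1 - Real.exp (-(k:ℝ))) * Real.log x :=
      Real.log_rpow hx0 _
    have ha0 : (0:ℝ) < a := by linarith
    have hexp_split : Real.exp (1 - (k:ℝ)) = Real.exp 1 * Real.exp (-(k:ℝ)) := by
      rw [← Real.exp_add]; ring_nf
    have hlogba : Real.log (b / a) = (Real.exp 1 - 1) * (Real.exp (-(k:ℝ)) * Real.log x) := by
      rw [Real.log_div (by linarith) (by linarith), hloga, hlogb, hexp_split]
      ring
    -- nonemptiness gives lower bound on exp(-k) * log x
    have hlow : Real.log 2 < Real.exp 1 * (Real.exp (-(k:ℝ)) * Real.log x) := by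
      obtain ⟨p, hp⟩ := hPne
      obtain ⟨_, _, hpx2, hpa, _⟩ := hPk p hp
      have hax2 : a < x / 2 := lt_of_lt_of_le hpa hpx2
      have := Real.log_lt_log ha0 hax2
      rw [hloga, Real.log_div (by linarith) (by norm_num), hexp_split] at this
      nlinarith
    have hmerP : ∑ p ∈ Pk x k, Real.log p / p
        ≤ 29 * (Real.exp (-(k:ℝ)) * Real.log x) := by
      have key := mertens_interval ha1 hab (Pk x k) (fun p hp => by
        obtain ⟨hpp, _, _, hpa, hpb⟩ := hPk p hp
        exact ⟨hpp, hpa, hpb⟩)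
      have he1 : Real.exp 1 < 2.7182818286 := Real.exp_one_lt_d9
      have he1' : (1:ℝ) < Real.exp 1 := by
        have := Real.add_one_le_exp (1:ℝ); linarith
      have hu : 0 < Real.exp (-(k:ℝ)) * Real.log x := by positivity
      calc ∑ p ∈ Pk x k, Real.log p / p
          ≤ (Real.log (b/a) / Real.log 2 + 2) * (2 * Real.log 4) := key
        _ = 4 * Real.log (b/a) + 8 * Real.log 2 := by
            rw [log_four]; field_simp; ring
        _ ≤ 4 * ((Real.exp 1 - 1) * (Real.exp (-(k:ℝ)) * Real.log x)) +
              8 * (Real.exp 1 * (Real.exp (-(k:ℝ)) * Real.log x)) := by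
            rw [hlogba]; nlinarith
        _ ≤ 29 * (Real.exp (-(k:ℝ)) * Real.log x) := by nlinarith
    calc ∑ p ∈ Pk x k, ∑ q ∈ primesUpTo (x / p),
          (Real.log p * Real.log q / Real.log (x / p)) * (⌊x / (p * q)⌋₊ : ℝ)
        ≤ ∑ p ∈ Pk x k, 12 * x * (Real.log p / p) := Finset.sum_le_sum inner_bound
      _ = 12 * x * ∑ p ∈ Pk x k, Real.log p / p := by rw [Finset.mul_sum]
      _ ≤ 12 * x * (29 * (Real.exp (-(k:ℝ)) * Real.log x)) := by
          apply mul_le_mul_of_nonneg_left hmerP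
          positivity
      _ = 348 * Real.exp (-(k : ℝ)) * x * Real.log x := by ring
end

section
/- Summing over k: for x ≥ 16 and f multiplicative with |f| ≤ 1, |S(x)| ≪ (1/log x) ∑_{k=1}^{K} |S_k(x)| + x (log log x)/log x, where K = ⌈log log x⌉ + O(1) is the largest k with P_k nonempty, S_k as above. -/
open Finset MeasureTheory
open scoped Classical BigOperators

/-- telescoping bound -/
lemma tele_sum (N : ℕ) : ∑ m ∈ Icc 2 N, 1 / ((m : ℝ) * Real.sqrt m) ≤ 2 := by
  have key : ∀ n : ℕ, 1 ≤ n → ∑ m ∈ Icc 2 n, 1 / ((m : ℝ) * Real.sqrt m)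
      ≤ 2 - 2 / Real.sqrt n := by
    intro n hn
    induction n, hn using Nat.le_induction with
    | base => simp
    | succ n hn ih =>
      rw [Finset.sum_Icc_succ_top (by omega)]
      have hb : (0:ℝ) < Real.sqrt (n+1) := Real.sqrt_pos.2 (by positivity)
      have ha : (0:ℝ) < Real.sqrt n := by
        have : (1:ℝ) ≤ (n:ℝ) := by exact_mod_cast hn
        exact Real.sqrt_pos.2 (by linarith)
      have hab : Real.sqrt n ≤ Real.sqrt (n+1) := Real.sqrt_le_sqrt (by push_cast; linarith)
      have ha2 : Real.sqrt n * Real.sqrt n = (n:ℝ) := Real.mul_self_sqrt (by positivity)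
      have hb2 : Real.sqrt (n+1) * Real.sqrt (n+1) = ((n:ℝ)+1) := by
        have := Real.mul_self_sqrt (x := ((n:ℝ)+1)) (by positivity)
        rw [← this]; norm_num
      have hstep : 1 / (((n:ℕ)+1 : ℝ) * Real.sqrt ((n:ℕ)+1)) ≤
          2 / Real.sqrt n - 2 / Real.sqrt (n+1) := by
        rw [div_sub_div _ _ (ne_of_gt ha) (ne_of_gt hb), div_le_div_iff₀ (by positivity) (by positivity)]
        push_cast
        nlinarith [mul_pos ha hb, mul_pos (mul_pos ha hb) hb, sq_nonneg (Real.sqrt (n+1) - Real.sqrt n)]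
      have : ((n:ℝ)+1) = (((n+1 : ℕ)):ℝ) := by push_cast; ring
      have hcast : ((n+1:ℕ):ℝ) = (n:ℝ)+1 := by push_cast; ring
      rw [hcast]
      have h2 : 2 - 2 / Real.sqrt n + (2 / Real.sqrt n - 2 / Real.sqrt ((n:ℝ)+1)) = 2 - 2/Real.sqrt ((n:ℝ)+1) := by ring
      calc ∑ m ∈ Icc 2 n, 1 / ((m : ℝ) * Real.sqrt m) + 1 / (((n:ℝ)+1) * Real.sqrt ((n:ℝ)+1))
          ≤ (2 - 2 / Real.sqrt n) + (2 / Real.sqrt n - 2 / Real.sqrt ((n:ℝ)+1)) := by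
            apply add_le_add ih
            exact_mod_cast hstep
        _ = 2 - 2 / Real.sqrt ((n:ℝ)+1) := by ring
  rcases Nat.eq_zero_or_pos N with h | h
  · subst h; simp
  · have := key N h
    have : 0 ≤ 2 / Real.sqrt N := by positivity
    linarith [key N h]

lemma log_le_two_sqrt {t : ℝ} (ht : 1 ≤ t) : Real.log t ≤ 2 * Real.sqrt t := by
  have h0 : (0:ℝ) < t := by linarith
  have h1 : Real.log t = 2 * Real.log (Real.sqrt t) := by
    rw [Real.log_sqrt h0.le]; ring
  have h2 : Real.log (Real.sqrt t) ≤ Real.sqrt t - 1 :=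
    Real.log_le_sub_one_of_pos (Real.sqrt_pos.2 h0)
  nlinarith [Real.sqrt_nonneg t]

/-- key pointwise bound -/
lemma log_div_sq_le_s18 {m : ℕ} (hm : 2 ≤ m) :
    Real.log m / ((m:ℝ) * m) ≤ 2 * (1 / ((m:ℝ) * Real.sqrt m)) := by
  have h1 : (1:ℝ) ≤ (m:ℝ) := by exact_mod_cast Nat.one_le_of_lt hm
  have h0 : (0:ℝ) < m := by linarith
  have hs : (0:ℝ) < Real.sqrt m := Real.sqrt_pos.2 h0
  have h2 : Real.log m ≤ 2 * Real.sqrt m := log_le_two_sqrt h1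
  have h3 : Real.sqrt m * Real.sqrt m = (m:ℝ) := Real.mul_self_sqrt h0.le
  rw [div_le_iff₀ (by positivity)]
  have : 2 * (1 / ((m:ℝ) * Real.sqrt m)) * ((m:ℝ) * m) = 2 * Real.sqrt m := by
    field_simp
    nlinarith
  rw [this]; exact h2

lemma sum_log_div_sq_le_s18 (s : Finset ℕ) (N : ℕ) (hs : s ⊆ Icc 2 N) :
    ∑ m ∈ s, Real.log m / ((m:ℝ) * m) ≤ 4 := by
  have h1 : ∑ m ∈ s, Real.log m / ((m:ℝ) * m) ≤ ∑ m ∈ Icc 2 N, Real.log m / ((m:ℝ) * m) := by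
    apply Finset.sum_le_sum_of_subset_of_nonneg hs
    intro i hi _
    have : (1:ℕ) ≤ i := le_trans (by norm_num) (Finset.mem_Icc.1 hi).1
    have : (1:ℝ) ≤ (i:ℝ) := by exact_mod_cast this
    have := Real.log_nonneg this
    positivity
  have h2 : ∑ m ∈ Icc 2 N, Real.log m / ((m:ℝ) * m) ≤ ∑ m ∈ Icc 2 N, 2 * (1 / ((m:ℝ) * Real.sqrt m)) := by
    apply Finset.sum_le_sum
    intro m hm
    exact log_div_sq_le_s18 (Finset.mem_Icc.1 hm).1
  have h3 : ∑ m ∈ Icc 2 N, 2 * (1/((m:ℝ) * Real.sqrt m)) = 2 * ∑ m ∈ Icc 2 N, 1/((m:ℝ) * Real.sqrt m) := by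
    rw [Finset.mul_sum]
  linarith [tele_sum N]

/-- Chebyshev bound from primorial -/
lemma theta_le_s18 (y : ℝ) (hy : 0 ≤ y) : ∑ p ∈ primesUpTo y, Real.log p ≤ y * Real.log 4 := by
  set N := ⌊y⌋₊ with hN
  have hset : primesUpTo y = (Finset.range (N+1)).filter Nat.Prime := by
    unfold primesUpTo
    ext p
    simp only [Finset.mem_filter, Finset.mem_Icc, Finset.mem_range]
    constructor
    · rintro ⟨⟨h1, h2⟩, hp⟩; exact ⟨by omega, hp⟩
    · rintro ⟨h1, hp⟩; exact ⟨⟨hp.one_lt.le, by omega⟩, hp⟩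
  rw [hset]
  have hpos : ∀ p ∈ (Finset.range (N+1)).filter Nat.Prime, ((p:ℝ)) ≠ 0 := by
    intro p hp
    have := (Finset.mem_filter.1 hp).2.pos
    positivity
  have h1 : ∑ p ∈ (Finset.range (N+1)).filter Nat.Prime, Real.log p
      = Real.log (∏ p ∈ (Finset.range (N+1)).filter Nat.Prime, (p:ℝ)) := by
    rw [Real.log_prod hpos]
  rw [h1]
  have h2 : (∏ p ∈ (Finset.range (N+1)).filter Nat.Prime, (p:ℝ)) = ((primorial N : ℕ) : ℝ) := by
    rw [primorial]; push_cast; ring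
  rw [h2]
  have h3 : ((primorial N : ℕ):ℝ) ≤ ((4^N : ℕ):ℝ) := by exact_mod_cast primorial_le_4_pow N
  have hp0 : (0:ℝ) < ((primorial N : ℕ):ℝ) := by exact_mod_cast primorial_pos N
  have h4 : Real.log ((primorial N : ℕ):ℝ) ≤ Real.log ((4:ℝ)^N) := by
    apply Real.log_le_log hp0
    exact_mod_cast h3
  have h5 : Real.log ((4:ℝ)^N) = (N:ℝ) * Real.log 4 := Real.log_pow 4 N
  have h6 : (N:ℝ) ≤ y := Nat.floor_le hy
  have h7 : (0:ℝ) ≤ Real.log 4 := Real.log_nonneg (by norm_num)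
  calc Real.log ((primorial N : ℕ):ℝ) ≤ (N:ℝ) * Real.log 4 := by rw [← h5]; exact h4
    _ ≤ y * Real.log 4 := by nlinarith

/-- hyperbola swap -/
lemma swap_sum {M : Type*} [AddCommMonoid M] (N : ℕ) (F : ℕ → ℕ → M) :
    ∑ n ∈ Icc 1 N, ∑ d ∈ n.divisors, F d (n / d)
      = ∑ d ∈ Icc 1 N, ∑ m ∈ Icc 1 (N / d), F d m := by
  rw [Finset.sum_sigma' (Icc 1 N) (fun n => n.divisors) (fun n d => F d (n/d)),
      Finset.sum_sigma' (Icc 1 N) (fun d => Icc 1 (N/d)) (fun d m => F d m)]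
  apply Finset.sum_nbij' (fun s => (⟨s.2, s.1 / s.2⟩ : Σ _ : ℕ, ℕ))
    (fun s => (⟨s.1 * s.2, s.1⟩ : Σ _ : ℕ, ℕ))
  · rintro ⟨n, d⟩ hs
    simp only [Finset.mem_sigma, Finset.mem_Icc, Nat.mem_divisors] at hs ⊢
    obtain ⟨⟨hn1, hnN⟩, hd, hn0⟩ := hs
    have hd0 : 0 < d := Nat.pos_of_dvd_of_pos hd (by omega)
    refine ⟨⟨hd0, le_trans (Nat.le_of_dvd (by omega) hd) hnN⟩, ?_, ?_⟩
    · exact Nat.one_le_div_iff hd0 |>.2 (Nat.le_of_dvd (by omega) hd)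
    · exact Nat.div_le_div_right hnN
  · rintro ⟨d, m⟩ hs
    simp only [Finset.mem_sigma, Finset.mem_Icc, Nat.mem_divisors] at hs ⊢
    obtain ⟨⟨hd1, hdN⟩, hm1, hmNd⟩ := hs
    have hdm : d * m ≤ N := (Nat.le_div_iff_mul_le (by omega)).1 hmNd |>.trans_eq' (by ring)
    refine ⟨⟨Nat.one_le_iff_ne_zero.2 ?_, hdm⟩, ⟨dvd_mul_right d m, ?_⟩⟩ <;> positivity
  · rintro ⟨n, d⟩ hs
    simp only [Finset.mem_sigma, Finset.mem_Icc, Nat.mem_divisors] at hs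
    obtain ⟨⟨hn1, hnN⟩, hd, hn0⟩ := hs
    simp only [Sigma.mk.inj_iff, heq_eq_eq]
    exact ⟨Nat.mul_div_cancel' hd, trivial⟩
  · rintro ⟨d, m⟩ hs
    simp only [Finset.mem_sigma, Finset.mem_Icc] at hs
    simp only [Sigma.mk.inj_iff, heq_eq_eq]
    exact ⟨trivial, Nat.mul_div_cancel_left m (show 0 < d by omega)⟩
  · rintro ⟨n, d⟩ _; rfl

open ArithmeticFunction in
lemma sum_log_eq (N : ℕ) :
    ∑ m ∈ Icc 1 N, Real.log m = ∑ d ∈ Icc 1 N, Λ d * ((N / d : ℕ) : ℝ) := by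
  have h := swap_sum N (fun d _ => Λ d)
  have h1 : ∀ n ∈ Icc 1 N, ∑ d ∈ n.divisors, Λ d = Real.log n := fun n _ => vonMangoldt_sum
  rw [Finset.sum_congr rfl h1] at h
  rw [h]
  apply Finset.sum_congr rfl
  intro d _
  rw [Finset.sum_const, Nat.card_Icc]
  simp [nsmul_eq_mul, mul_comm]

lemma geom_half (N : ℕ) : ∑ k ∈ Icc 2 N, ((1:ℝ)/2)^k ≤ 1/2 := by
  have key : ∀ n : ℕ, 1 ≤ n → ∑ k ∈ Icc 2 n, ((1:ℝ)/2)^k = 1/2 - (1/2)^n := by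
    intro n hn
    induction n, hn using Nat.le_induction with
    | base => norm_num
    | succ n hn ih =>
      rw [Finset.sum_Icc_succ_top (by omega), ih]
      ring
  rcases Nat.eq_zero_or_pos N with h | h
  · subst h; simp
  · rw [key N h]
    have : (0:ℝ) < (1/2)^N := by positivity
    linarith

lemma geom_p (p N : ℕ) (hp : 2 ≤ p) : ∑ k ∈ Icc 2 N, (1:ℝ)/(p:ℝ)^k ≤ 2/((p:ℝ)*p) := by
  have hp0 : (0:ℝ) < p := by positivity
  have hp2 : (2:ℝ) ≤ p := by exact_mod_cast hp
  have h1 : ∀ k ∈ Icc 2 N, (1:ℝ)/(p:ℝ)^k ≤ (4/((p:ℝ)*p)) * (1/2)^k := by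
    intro k hk
    obtain ⟨hk2, _⟩ := Finset.mem_Icc.1 hk
    have hkey : (p:ℝ)*p*2^k ≤ 4*(p:ℝ)^k := by
      have h2 : ((2:ℝ))^(k-2) ≤ (p:ℝ)^(k-2) := pow_le_pow_left₀ (by norm_num) hp2 _
      have hk' : k - 2 + 2 = k := by omega
      calc (p:ℝ)*p*2^k = (p:ℝ)*p*(2^(k-2)*2^2) := by rw [← pow_add, hk']
        _ ≤ (p:ℝ)*p*(p^(k-2)*4) := by nlinarith [pow_pos (show (0:ℝ)<2 by norm_num) (k-2), pow_pos hp0 (k-2)]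
        _ = 4*((p:ℝ)^(k-2)*p^2) := by ring
        _ = 4*(p:ℝ)^k := by rw [← pow_add, hk']
    have hr : (4/((p:ℝ)*p)) * (1/2)^k = 4/(((p:ℝ)*p)*2^k) := by
      rw [one_div, inv_pow, ← one_div, div_mul_div_comm, mul_one]
    rw [hr, div_le_div_iff₀ (pow_pos hp0 k) (by positivity)]
    linarith [hkey]
  have h2 := Finset.sum_le_sum h1
  have h3 : ∑ k ∈ Icc 2 N, (4/((p:ℝ)*p)) * (1/2)^k = (4/((p:ℝ)*p)) * ∑ k ∈ Icc 2 N, ((1:ℝ)/2)^k := by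
    rw [Finset.mul_sum]
  have h4 := geom_half N
  calc ∑ k ∈ Icc 2 N, (1:ℝ)/(p:ℝ)^k ≤ (4/((p:ℝ)*p)) * ∑ k ∈ Icc 2 N, ((1:ℝ)/2)^k := by
        rw [← h3]; exact h2
    _ ≤ (4/((p:ℝ)*p)) * (1/2) := by
        apply mul_le_mul_of_nonneg_left h4 (by positivity)
    _ = 2/((p:ℝ)*p) := by ring

open ArithmeticFunction in
/-- bound on non-prime prime powers -/
lemma pp_bound (N : ℕ) :
    ∑ d ∈ (Icc 1 N).filter (fun d => ¬ d.Prime), Λ d / d ≤ 8 := by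
  classical
  set A' : Finset ℕ := ((Icc 1 N).filter (fun d => ¬ d.Prime)).filter IsPrimePow with hA'
  have hstep1 : ∑ d ∈ (Icc 1 N).filter (fun d => ¬ d.Prime), Λ d / (d:ℝ)
      = ∑ d ∈ A', Λ d / d := by
    rw [hA']
    refine (Finset.sum_filter_of_ne ?_).symm
    intro d _ hne
    by_contra hpp
    rw [vonMangoldt_apply, if_neg hpp] at hne
    simp at hne
  rw [hstep1]
  set g : ℕ × ℕ → ℝ := fun e => Real.log e.1 / (e.1:ℝ)^e.2 with hg
  set i : ℕ → ℕ × ℕ := fun d => (d.minFac, d.factorization d.minFac) with hi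
  have hdecomp : ∀ d ∈ A', ∃ p k : ℕ, p.Prime ∧ 2 ≤ k ∧ d = p ^ k ∧ i d = (p, k) := by
    intro d hd
    simp only [hA', Finset.mem_filter, Finset.mem_Icc] at hd
    obtain ⟨⟨⟨hd1, hdN⟩, hnp⟩, hpp⟩ := hd
    obtain ⟨p, k, hp, hk, hpk⟩ := (isPrimePow_nat_iff d).1 hpp
    have hk0 : k ≠ 0 := by omega
    have hminfac : d.minFac = p := by rw [← hpk]; exact hp.pow_minFac hk0
    have hfact : d.factorization p = k := by
      rw [← hpk, hp.factorization_pow]; simp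
    have hk2 : 2 ≤ k := by
      rcases Nat.lt_or_ge k 2 with h | h
      · interval_cases k
        exfalso; apply hnp; rw [← hpk]; simpa using hp
      · exact h
    exact ⟨p, k, hp, hk2, hpk.symm, by rw [hi]; simp [hminfac, hfact]⟩
  have hval : ∀ d ∈ A', Λ d / (d:ℝ) = g (i d) := by
    intro d hd
    obtain ⟨p, k, hp, hk2, hdpk, hid⟩ := hdecomp d hd
    simp only [hA', Finset.mem_filter] at hd
    have hpp : IsPrimePow d := hd.2
    have hminfac : d.minFac = p := by rw [hdpk]; exact hp.pow_minFac (by omega)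
    rw [vonMangoldt_apply, if_pos hpp, hminfac, hid]
    simp only [hg]
    rw [hdpk]
    push_cast
    ring
  have hinj : ∀ d ∈ A', ∀ d' ∈ A', i d = i d' → d = d' := by
    intro d hd d' hd' heq
    obtain ⟨p, k, hp, hk2, hdpk, hid⟩ := hdecomp d hd
    obtain ⟨p', k', hp', hk2', hdpk', hid'⟩ := hdecomp d' hd'
    rw [hid, hid'] at heq
    have h1 : p = p' := congrArg Prod.fst heq
    have h2 : k = k' := congrArg Prod.snd heq
    rw [hdpk, hdpk', h1, h2]
  have himg : ∑ d ∈ A', Λ d / (d:ℝ) = ∑ e ∈ A'.image i, g e := by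
    rw [Finset.sum_image hinj]
    exact Finset.sum_congr rfl hval
  rw [himg]
  set T : Finset (ℕ × ℕ) := ((Icc 1 N).filter Nat.Prime) ×ˢ (Icc 2 N) with hT
  have hsub : A'.image i ⊆ T := by
    intro e he
    obtain ⟨d, hd, hde⟩ := Finset.mem_image.1 he
    obtain ⟨p, k, hp, hk2, hdpk, hid⟩ := hdecomp d hd
    simp only [hA', Finset.mem_filter, Finset.mem_Icc] at hd
    obtain ⟨⟨⟨hd1, hdN⟩, _⟩, _⟩ := hd
    rw [← hde, hid, hT]
    simp only [Finset.mem_product, Finset.mem_filter, Finset.mem_Icc]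
    have hpd : p ≤ d := by
      rw [hdpk]; exact Nat.le_self_pow (by omega) p
    have hkd : k ≤ N := by
      have h2k : k < 2^k := Nat.lt_two_pow_self (n := k)
      have : 2^k ≤ p^k := Nat.pow_le_pow_left hp.two_le k
      omega
    exact ⟨⟨⟨hp.one_lt.le, le_trans hpd hdN⟩, hp⟩, ⟨hk2, hkd⟩⟩
  have hnonneg : ∀ e ∈ T, 0 ≤ g e := by
    intro e he
    simp only [hT, Finset.mem_product, Finset.mem_filter, Finset.mem_Icc] at he
    have : (1:ℝ) ≤ e.1 := by exact_mod_cast he.1.1.1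
    have := Real.log_nonneg this
    positivity
  have h5 : ∑ e ∈ A'.image i, g e ≤ ∑ e ∈ T, g e :=
    Finset.sum_le_sum_of_subset_of_nonneg hsub (fun e he _ => hnonneg e he)
  have h6 : ∑ e ∈ T, g e = ∑ p ∈ (Icc 1 N).filter Nat.Prime, ∑ k ∈ Icc 2 N, Real.log p / (p:ℝ)^k := by
    rw [hT, Finset.sum_product]
  have h7 : ∀ p ∈ (Icc 1 N).filter Nat.Prime, ∑ k ∈ Icc 2 N, Real.log p / (p:ℝ)^k
      ≤ 2 * (Real.log p / ((p:ℝ)*p)) := by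
    intro p hp
    have hpp := (Finset.mem_filter.1 hp).2
    have hlog : 0 ≤ Real.log p := Real.log_nonneg (by exact_mod_cast hpp.one_lt.le)
    have h8 : ∑ k ∈ Icc 2 N, Real.log p / (p:ℝ)^k = Real.log p * ∑ k ∈ Icc 2 N, 1/(p:ℝ)^k := by
      rw [Finset.mul_sum]
      apply Finset.sum_congr rfl
      intro k _; ring
    rw [h8]
    have := geom_p p N hpp.two_le
    calc Real.log p * ∑ k ∈ Icc 2 N, 1/(p:ℝ)^k ≤ Real.log p * (2/((p:ℝ)*p)) :=
          mul_le_mul_of_nonneg_left this hlog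
      _ = 2 * (Real.log p / ((p:ℝ)*p)) := by ring
  have h9 : ∑ p ∈ (Icc 1 N).filter Nat.Prime, 2 * (Real.log p / ((p:ℝ)*p)) ≤ 2 * 4 := by
    rw [← Finset.mul_sum]
    have hsub2 : (Icc 1 N).filter Nat.Prime ⊆ Icc 2 N := by
      intro p hp
      obtain ⟨hp1, hpp⟩ := Finset.mem_filter.1 hp
      obtain ⟨_, h2⟩ := Finset.mem_Icc.1 hp1
      exact Finset.mem_Icc.2 ⟨hpp.two_le, h2⟩
    have := sum_log_div_sq_le_s18 ((Icc 1 N).filter Nat.Prime) N hsub2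
    linarith
  calc ∑ e ∈ A'.image i, g e ≤ ∑ e ∈ T, g e := h5
    _ = _ := h6
    _ ≤ ∑ p ∈ (Icc 1 N).filter Nat.Prime, 2 * (Real.log p / ((p:ℝ)*p)) := Finset.sum_le_sum h7
    _ ≤ 8 := by linarith

lemma sum_log_ge (N : ℕ) (h : 1 ≤ N) :
    (N:ℝ) * Real.log N - N + 1 ≤ ∑ m ∈ Icc 1 N, Real.log m := by
  induction N, h using Nat.le_induction with
  | base => simp
  | succ n hn ih =>
    rw [Finset.sum_Icc_succ_top (by omega)]
    have hn1 : (1:ℝ) ≤ (n:ℝ) := by exact_mod_cast hn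
    have hpos : (0:ℝ) < n := by linarith
    have hkey : (n:ℝ) * (Real.log (n+1) - Real.log n) ≤ 1 := by
      have h1 : Real.log (n+1) - Real.log n = Real.log ((n+1)/n) := by
        rw [Real.log_div (by positivity) (by positivity)]
      have h2 : Real.log (((n:ℝ)+1)/n) ≤ ((n:ℝ)+1)/n - 1 :=
        Real.log_le_sub_one_of_pos (by positivity)
      have h3 : ((n:ℝ)+1)/n - 1 = 1/n := by field_simp; ring
      rw [h1]
      calc (n:ℝ) * Real.log (((n:ℝ)+1)/n) ≤ (n:ℝ) * (1/n) := by
            rw [h3] at h2; exact mul_le_mul_of_nonneg_left h2 (by positivity)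
        _ = 1 := by field_simp
    have hcast : ((n+1:ℕ):ℝ) = (n:ℝ)+1 := by push_cast; ring
    rw [hcast]
    nlinarith [ih]

lemma sum_log_le (N : ℕ) : ∑ m ∈ Icc 1 N, Real.log m ≤ (N:ℝ) * Real.log N := by
  rcases Nat.eq_zero_or_pos N with h | h
  · subst h; simp
  have h1 : ∀ m ∈ Icc 1 N, Real.log m ≤ Real.log N := by
    intro m hm
    obtain ⟨hm1, hm2⟩ := Finset.mem_Icc.1 hm
    apply Real.log_le_log (by exact_mod_cast hm1) (by exact_mod_cast hm2)
  calc ∑ m ∈ Icc 1 N, Real.log m ≤ ∑ m ∈ Icc 1 N, Real.log N := Finset.sum_le_sum h1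
    _ = (N:ℝ) * Real.log N := by
        rw [Finset.sum_const, Nat.card_Icc]
        simp [nsmul_eq_mul]

open ArithmeticFunction in
lemma mertens_nat_up (N : ℕ) (h : 1 ≤ N) :
    ∑ p ∈ (Icc 1 N).filter Nat.Prime, Real.log p / p ≤ Real.log N + 2 := by
  have hN : (0:ℝ) < N := by exact_mod_cast h
  -- lower bound each ↑(N/p) by N/p - 1
  have key : ∀ p ∈ (Icc 1 N).filter Nat.Prime,
      Real.log p * ((N:ℝ)/p - 1) ≤ Λ p * ((N/p : ℕ):ℝ) := by
    intro p hp
    obtain ⟨hpI, hpp⟩ := Finset.mem_filter.1 hp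
    have hp0 : (0:ℝ) < p := by exact_mod_cast hpp.pos
    have hlog : 0 ≤ Real.log p := Real.log_nonneg (by exact_mod_cast hpp.one_lt.le)
    have hfloor : (N:ℝ)/p - 1 ≤ ((N/p : ℕ):ℝ) := by
      have hmod := Nat.div_add_mod N p
      have hlt : N % p < p := Nat.mod_lt _ hpp.pos
      have h2 : (N:ℝ) < ((N/p:ℕ):ℝ) * p + p := by
        have : (N:ℝ) = (p:ℝ) * ((N/p:ℕ):ℝ) + ((N % p : ℕ):ℝ) := by exact_mod_cast hmod.symm
        rw [this]
        have : ((N % p : ℕ):ℝ) < (p:ℝ) := by exact_mod_cast hlt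
        linarith
      rw [div_sub_one (ne_of_gt hp0), div_le_iff₀ hp0]
      linarith
    rw [vonMangoldt_apply_prime hpp]
    exact mul_le_mul_of_nonneg_left hfloor hlog
  -- sum over primes of Λ p * (N/p) is at most the full von Mangoldt sum
  have hsub : ∑ p ∈ (Icc 1 N).filter Nat.Prime, Λ p * ((N/p : ℕ):ℝ)
      ≤ ∑ d ∈ Icc 1 N, Λ d * ((N/d : ℕ):ℝ) := by
    apply Finset.sum_le_sum_of_subset_of_nonneg (Finset.filter_subset _ _)
    intro d _ _
    have := vonMangoldt_nonneg (n := d)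
    positivity
  have hlogfac : ∑ d ∈ Icc 1 N, Λ d * ((N/d : ℕ):ℝ) ≤ (N:ℝ) * Real.log N := by
    rw [← sum_log_eq]; exact sum_log_le N
  have htheta : ∑ p ∈ (Icc 1 N).filter Nat.Prime, Real.log p ≤ (N:ℝ) * Real.log 4 := by
    have h0 : (0:ℝ) ≤ (N:ℝ) := by positivity
    have := theta_le_s18 (N:ℝ) h0
    have hpUT : primesUpTo (N:ℝ) = (Icc 1 N).filter Nat.Prime := by
      unfold primesUpTo; rw [Nat.floor_natCast]
    rw [hpUT] at this
    exact this
  have hexpand : ∑ p ∈ (Icc 1 N).filter Nat.Prime, Real.log p * ((N:ℝ)/p - 1)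
      = (N:ℝ) * (∑ p ∈ (Icc 1 N).filter Nat.Prime, Real.log p / p)
        - ∑ p ∈ (Icc 1 N).filter Nat.Prime, Real.log p := by
    rw [Finset.mul_sum, ← Finset.sum_sub_distrib]
    apply Finset.sum_congr rfl
    intro p _
    ring
  have hchain : (N:ℝ) * (∑ p ∈ (Icc 1 N).filter Nat.Prime, Real.log p / p)
      - ∑ p ∈ (Icc 1 N).filter Nat.Prime, Real.log p ≤ (N:ℝ) * Real.log N := by
    rw [← hexpand]
    calc ∑ p ∈ (Icc 1 N).filter Nat.Prime, Real.log p * ((N:ℝ)/p - 1)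
        ≤ ∑ p ∈ (Icc 1 N).filter Nat.Prime, Λ p * ((N/p : ℕ):ℝ) := Finset.sum_le_sum key
      _ ≤ _ := hsub
      _ ≤ _ := hlogfac
  have hlog4 : Real.log 4 ≤ 2 := by
    have h2 : (4:ℝ) ≤ Real.exp 2 := by
      have := Real.exp_one_gt_d9
      have hsq : Real.exp 2 = Real.exp 1 * Real.exp 1 := by
        rw [← Real.exp_add]; norm_num
      nlinarith
    calc Real.log 4 ≤ Real.log (Real.exp 2) := Real.log_le_log (by norm_num) h2
      _ = 2 := Real.log_exp 2
  have := hchain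
  nlinarith [htheta]

open ArithmeticFunction in
lemma mertens_nat_low (N : ℕ) (h : 1 ≤ N) :
    Real.log N - 9 ≤ ∑ p ∈ (Icc 1 N).filter Nat.Prime, Real.log p / p := by
  have hN : (0:ℝ) < N := by exact_mod_cast h
  have h1 : ∑ d ∈ Icc 1 N, Λ d * ((N/d : ℕ):ℝ) ≤ (N:ℝ) * ∑ d ∈ Icc 1 N, Λ d / d := by
    rw [Finset.mul_sum]
    apply Finset.sum_le_sum
    intro d hd
    obtain ⟨hd1, _⟩ := Finset.mem_Icc.1 hd
    have hd0 : (0:ℝ) < d := by exact_mod_cast hd1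
    have hΛ : 0 ≤ Λ d := vonMangoldt_nonneg
    have hfloor : ((N/d : ℕ):ℝ) ≤ (N:ℝ)/d := Nat.cast_div_le
    calc Λ d * ((N/d : ℕ):ℝ) ≤ Λ d * ((N:ℝ)/d) := mul_le_mul_of_nonneg_left hfloor hΛ
      _ = (N:ℝ) * (Λ d / d) := by ring
  have h2 : ∑ d ∈ Icc 1 N, Λ d / (d:ℝ)
      = ∑ p ∈ (Icc 1 N).filter Nat.Prime, Λ p / p
        + ∑ d ∈ (Icc 1 N).filter (fun d => ¬ d.Prime), Λ d / d := by
    rw [Finset.sum_filter_add_sum_filter_not]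
  have h3 : ∑ p ∈ (Icc 1 N).filter Nat.Prime, Λ p / (p:ℝ)
      = ∑ p ∈ (Icc 1 N).filter Nat.Prime, Real.log p / p := by
    apply Finset.sum_congr rfl
    intro p hp
    rw [vonMangoldt_apply_prime (Finset.mem_filter.1 hp).2]
  have h4 := pp_bound N
  have h5 := sum_log_ge N h
  rw [sum_log_eq] at h5
  have h6 : (N:ℝ) * Real.log N - N ≤ (N:ℝ) * (∑ p ∈ (Icc 1 N).filter Nat.Prime, Real.log p / p + 8) := by
    calc (N:ℝ) * Real.log N - N ≤ (N:ℝ) * Real.log N - N + 1 := by linarith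
      _ ≤ ∑ d ∈ Icc 1 N, Λ d * ((N/d : ℕ):ℝ) := h5
      _ ≤ (N:ℝ) * ∑ d ∈ Icc 1 N, Λ d / d := h1
      _ ≤ _ := by
          rw [h2, h3]
          apply mul_le_mul_of_nonneg_left _ (le_of_lt hN)
          linarith
  nlinarith [h6]

/-- Mertens upper bound, real version -/
lemma mertens_up (y : ℝ) (hy : 1 ≤ y) :
    ∑ p ∈ primesUpTo y, Real.log p / p ≤ Real.log y + 2 := by
  have hN : 1 ≤ ⌊y⌋₊ := Nat.le_floor (by exact_mod_cast hy)
  have h1 := mertens_nat_up ⌊y⌋₊ hN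
  have h2 : Real.log ⌊y⌋₊ ≤ Real.log y := by
    apply Real.log_le_log (by exact_mod_cast hN) (Nat.floor_le (by linarith))
  unfold primesUpTo
  linarith

/-- Mertens lower bound, real version -/
lemma mertens_low (y : ℝ) (hy : 1 ≤ y) :
    Real.log y - 10 ≤ ∑ p ∈ primesUpTo y, Real.log p / p := by
  have hN : 1 ≤ ⌊y⌋₊ := Nat.le_floor (by exact_mod_cast hy)
  have h1 := mertens_nat_low ⌊y⌋₊ hN
  have h2 : Real.log y ≤ Real.log ⌊y⌋₊ + Real.log 2 := by
    have hfl : y < (⌊y⌋₊:ℝ) + 1 := Nat.lt_floor_add_one y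
    have h3 : y ≤ 2 * (⌊y⌋₊:ℝ) := by
      have : (1:ℝ) ≤ (⌊y⌋₊:ℝ) := by exact_mod_cast hN
      linarith
    calc Real.log y ≤ Real.log (2 * (⌊y⌋₊:ℝ)) := Real.log_le_log (by linarith) h3
      _ = Real.log 2 + Real.log ⌊y⌋₊ := Real.log_mul (by norm_num) (by positivity)
      _ = Real.log ⌊y⌋₊ + Real.log 2 := by ring
  have hlog2 : Real.log 2 ≤ 1 := by
    calc Real.log 2 ≤ Real.log (Real.exp 1) := Real.log_le_log (by norm_num)
          (by nlinarith [Real.exp_one_gt_d9])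
      _ = 1 := Real.log_exp 1
  unfold primesUpTo
  linarith

lemma sumf_le (f : ℕ → ℂ) (hb : ∀ n : ℕ, ‖f n‖ ≤ 1) (M : ℕ) :
    ‖∑ n ∈ Icc 1 M, f n‖ ≤ (M:ℝ) := by
  calc ‖∑ n ∈ Icc 1 M, f n‖ ≤ ∑ n ∈ Icc 1 M, ‖f n‖ := norm_sum_le _ _
    _ ≤ ∑ n ∈ Icc 1 M, 1 := Finset.sum_le_sum (fun n _ => hb n)
    _ = (M:ℝ) := by rw [Finset.sum_const, Nat.card_Icc]; simp

open ArithmeticFunction in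
lemma lemA (f : ℕ → ℂ) (hmult : ∀ m n : ℕ, Nat.Coprime m n → f (m*n) = f m * f n)
    (hb : ∀ n : ℕ, ‖f n‖ ≤ 1) (y : ℝ) (hy : 1 ≤ y) :
    ‖(∑ n ∈ Icc 1 ⌊y⌋₊, f n) * ((Real.log y : ℝ):ℂ) -
      ∑ q ∈ primesUpTo y, ((Real.log q : ℝ):ℂ) * f q * ∑ m ∈ Icc 1 (⌊y⌋₊ / q), f m‖
      ≤ 17 * y := by
  set N := ⌊y⌋₊ with hNdef
  have hN1 : 1 ≤ N := Nat.le_floor (by exact_mod_cast hy)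
  have hNy : (N:ℝ) ≤ y := Nat.floor_le (by linarith)
  have hN0 : (0:ℝ) < N := by exact_mod_cast hN1
  -- step 1
  have hstep1 : ‖(∑ n ∈ Icc 1 N, f n) * ((Real.log y : ℝ):ℂ)
      - ∑ n ∈ Icc 1 N, f n * ((Real.log n : ℝ):ℂ)‖ ≤ y := by
    rw [Finset.sum_mul, ← Finset.sum_sub_distrib]
    have hterm : ∀ n ∈ Icc 1 N, ‖f n * ((Real.log y : ℝ):ℂ) - f n * ((Real.log n : ℝ):ℂ)‖
        ≤ Real.log y - Real.log n := by
      intro n hn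
      obtain ⟨hn1, hn2⟩ := Finset.mem_Icc.1 hn
      have hn1' : (1:ℝ) ≤ n := by exact_mod_cast hn1
      have hn2' : (n:ℝ) ≤ y := le_trans (by exact_mod_cast hn2) hNy
      have hd : Real.log n ≤ Real.log y := Real.log_le_log (by linarith) hn2'
      calc ‖f n * ((Real.log y : ℝ):ℂ) - f n * ((Real.log n : ℝ):ℂ)‖
          = ‖f n‖ * ‖(((Real.log y - Real.log n : ℝ)):ℂ)‖ := by
            rw [← mul_sub, norm_mul, Complex.ofReal_sub]
        _ ≤ 1 * |Real.log y - Real.log n| := by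
            rw [Complex.norm_real]
            exact mul_le_mul_of_nonneg_right (hb n) (abs_nonneg _)
        _ = Real.log y - Real.log n := by
            rw [one_mul, abs_of_nonneg (by linarith)]
    calc ‖∑ n ∈ Icc 1 N, (f n * ((Real.log y : ℝ):ℂ) - f n * ((Real.log n : ℝ):ℂ))‖
        ≤ ∑ n ∈ Icc 1 N, (Real.log y - Real.log n) :=
          le_trans (norm_sum_le _ _) (Finset.sum_le_sum hterm)
      _ = (N:ℝ) * Real.log y - ∑ n ∈ Icc 1 N, Real.log n := by
          rw [Finset.sum_sub_distrib, Finset.sum_const, Nat.card_Icc]; simp [nsmul_eq_mul]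
      _ ≤ y := by
          have h5 := sum_log_ge N hN1
          have hlogdiv : Real.log y - Real.log N = Real.log (y / N) :=
            (Real.log_div (by linarith) (ne_of_gt hN0)).symm
          have h6 : Real.log (y / N) ≤ y / N - 1 := Real.log_le_sub_one_of_pos (by positivity)
          have h7 : (N:ℝ) * (Real.log y - Real.log N) ≤ (N:ℝ) * (y/N - 1) := by
            rw [hlogdiv]
            exact mul_le_mul_of_nonneg_left h6 (by positivity)
          have h8 : (N:ℝ) * (y/N) = y := by field_simp
          nlinarith
  -- step 2 : exact identity
  have hstep2 : ∑ n ∈ Icc 1 N, f n * ((Real.log n : ℝ):ℂ)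
      = ∑ d ∈ Icc 1 N, ∑ m ∈ Icc 1 (N / d), ((Λ d : ℝ):ℂ) * f (d * m) := by
    rw [← swap_sum N (fun d m => ((Λ d : ℝ):ℂ) * f (d * m))]
    apply Finset.sum_congr rfl
    intro n hn
    obtain ⟨hn1, _⟩ := Finset.mem_Icc.1 hn
    have hlog : ((Real.log n : ℝ):ℂ) = ∑ d ∈ n.divisors, ((Λ d : ℝ):ℂ) := by
      rw [← Complex.ofReal_sum]
      norm_cast
      exact vonMangoldt_sum.symm
    rw [hlog, Finset.mul_sum]
    apply Finset.sum_congr rfl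
    intro d hd
    obtain ⟨hdvd, _⟩ := Nat.mem_divisors.1 hd
    rw [Nat.mul_div_cancel' hdvd]
    ring
  -- step 3
  have hstep3 : ‖(∑ d ∈ Icc 1 N, ∑ m ∈ Icc 1 (N / d), ((Λ d : ℝ):ℂ) * f (d * m))
      - ∑ q ∈ primesUpTo y, ((Real.log q : ℝ):ℂ) * f q * ∑ m ∈ Icc 1 (N / q), f m‖
      ≤ 16 * y := by
    have hpUT : primesUpTo y = (Icc 1 N).filter Nat.Prime := rfl
    rw [hpUT, ← Finset.sum_filter_add_sum_filter_not (Icc 1 N) Nat.Prime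
      (fun d => ∑ m ∈ Icc 1 (N / d), ((Λ d : ℝ):ℂ) * f (d * m))]
    have hrw : (∑ q ∈ (Icc 1 N).filter Nat.Prime, ∑ m ∈ Icc 1 (N / q), ((Λ q : ℝ):ℂ) * f (q * m))
        + (∑ d ∈ (Icc 1 N).filter (fun d => ¬ d.Prime), ∑ m ∈ Icc 1 (N / d), ((Λ d : ℝ):ℂ) * f (d * m))
        - ∑ q ∈ (Icc 1 N).filter Nat.Prime, ((Real.log q : ℝ):ℂ) * f q * ∑ m ∈ Icc 1 (N / q), f m
        = (∑ q ∈ (Icc 1 N).filter Nat.Prime,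
            (∑ m ∈ Icc 1 (N / q), ((Λ q : ℝ):ℂ) * f (q * m)
              - ((Real.log q : ℝ):ℂ) * f q * ∑ m ∈ Icc 1 (N / q), f m))
          + ∑ d ∈ (Icc 1 N).filter (fun d => ¬ d.Prime), ∑ m ∈ Icc 1 (N / d), ((Λ d : ℝ):ℂ) * f (d * m) := by
      rw [Finset.sum_sub_distrib]; ring
    rw [hrw]
    have hprime : ‖∑ q ∈ (Icc 1 N).filter Nat.Prime,
        (∑ m ∈ Icc 1 (N / q), ((Λ q : ℝ):ℂ) * f (q * m)
          - ((Real.log q : ℝ):ℂ) * f q * ∑ m ∈ Icc 1 (N / q), f m)‖ ≤ 8 * y := by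
      have hterm : ∀ q ∈ (Icc 1 N).filter Nat.Prime,
          ‖∑ m ∈ Icc 1 (N / q), ((Λ q : ℝ):ℂ) * f (q * m)
            - ((Real.log q : ℝ):ℂ) * f q * ∑ m ∈ Icc 1 (N / q), f m‖
          ≤ 2 * (N:ℝ) * (Real.log q / ((q:ℝ) * q)) := by
        intro q hq
        have hqp := (Finset.mem_filter.1 hq).2
        have hq0 : (0:ℝ) < q := by exact_mod_cast hqp.pos
        have hlogq : 0 ≤ Real.log q := Real.log_nonneg (by exact_mod_cast hqp.one_lt.le)
        have hΛq : Λ q = Real.log q := vonMangoldt_apply_prime hqp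
        have hinner : ∑ m ∈ Icc 1 (N / q), ((Λ q : ℝ):ℂ) * f (q * m)
            - ((Real.log q : ℝ):ℂ) * f q * ∑ m ∈ Icc 1 (N / q), f m
            = ((Real.log q : ℝ):ℂ) * ∑ m ∈ Icc 1 (N / q), (f (q * m) - f q * f m) := by
          simp only [hΛq, Finset.mul_sum]
          rw [← Finset.sum_sub_distrib]
          exact Finset.sum_congr rfl (fun m _ => by ring)
        rw [hinner, norm_mul, Complex.norm_real, Real.norm_eq_abs, abs_of_nonneg hlogq]
        have hg : ∑ m ∈ Icc 1 (N / q), (f (q * m) - f q * f m)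
            = ∑ m ∈ (Icc 1 (N / q)).filter (fun m => q ∣ m), (f (q * m) - f q * f m) := by
          refine (Finset.sum_filter_of_ne ?_).symm
          intro m _ hne
          by_contra hdvd
          apply hne
          rw [hmult q m ((Nat.Prime.coprime_iff_not_dvd hqp).2 hdvd)]
          ring
        have hcard : ((Icc 1 (N / q)).filter (fun m => q ∣ m)).card = N / q / q := by
          rw [show Finset.Icc 1 (N/q) = Finset.Ioc 0 (N/q) from Finset.Icc_add_one_left_eq_Ioc 0 _,
            Nat.Ioc_filter_dvd_card_eq_div]
        have hnormg : ‖∑ m ∈ (Icc 1 (N / q)).filter (fun m => q ∣ m), (f (q * m) - f q * f m)‖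
            ≤ 2 * ((N / q / q : ℕ):ℝ) := by
          calc ‖∑ m ∈ (Icc 1 (N / q)).filter (fun m => q ∣ m), (f (q * m) - f q * f m)‖
              ≤ ∑ m ∈ (Icc 1 (N / q)).filter (fun m => q ∣ m), ‖f (q * m) - f q * f m‖ :=
                norm_sum_le _ _
            _ ≤ ∑ m ∈ (Icc 1 (N / q)).filter (fun m => q ∣ m), 2 := by
                apply Finset.sum_le_sum
                intro m _
                calc ‖f (q * m) - f q * f m‖ ≤ ‖f (q * m)‖ + ‖f q * f m‖ := norm_sub_le _ _
                  _ ≤ 1 + 1 * 1 := by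
                      refine add_le_add (hb _) ?_
                      rw [norm_mul]
                      exact mul_le_mul (hb q) (hb m) (norm_nonneg _) zero_le_one
                  _ = 2 := by norm_num
            _ = 2 * ((N / q / q : ℕ):ℝ) := by
                rw [Finset.sum_const, hcard]; simp [nsmul_eq_mul]; ring
        have hdivbound : ((N / q / q : ℕ):ℝ) ≤ (N:ℝ) / ((q:ℝ) * q) := by
          calc ((N / q / q : ℕ):ℝ) ≤ ((N / q : ℕ):ℝ) / q := Nat.cast_div_le
            _ ≤ ((N:ℝ) / q) / q := (div_le_div_iff_of_pos_right hq0).2 Nat.cast_div_le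
            _ = (N:ℝ) / ((q:ℝ) * q) := by rw [div_div]
        rw [hg]
        calc Real.log q * ‖∑ m ∈ (Icc 1 (N / q)).filter (fun m => q ∣ m), (f (q * m) - f q * f m)‖
            ≤ Real.log q * (2 * ((N / q / q : ℕ):ℝ)) := mul_le_mul_of_nonneg_left hnormg hlogq
          _ ≤ Real.log q * (2 * ((N:ℝ) / ((q:ℝ) * q))) := by
              apply mul_le_mul_of_nonneg_left _ hlogq
              linarith
          _ = 2 * (N:ℝ) * (Real.log q / ((q:ℝ) * q)) := by ring
      have hsum : ∑ q ∈ (Icc 1 N).filter Nat.Prime, 2 * (N:ℝ) * (Real.log q / ((q:ℝ) * q)) ≤ 8 * N := by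
        rw [← Finset.mul_sum]
        have hsub2 : (Icc 1 N).filter Nat.Prime ⊆ Icc 2 N := by
          intro p hp
          obtain ⟨hp1, hpp⟩ := Finset.mem_filter.1 hp
          exact Finset.mem_Icc.2 ⟨hpp.two_le, (Finset.mem_Icc.1 hp1).2⟩
        have := sum_log_div_sq_le_s18 ((Icc 1 N).filter Nat.Prime) N hsub2
        nlinarith
      calc ‖∑ q ∈ (Icc 1 N).filter Nat.Prime, _‖
          ≤ ∑ q ∈ (Icc 1 N).filter Nat.Prime, 2 * (N:ℝ) * (Real.log q / ((q:ℝ) * q)) :=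
            le_trans (norm_sum_le _ _) (Finset.sum_le_sum hterm)
        _ ≤ 8 * N := hsum
        _ ≤ 8 * y := by linarith
    have hnonprime : ‖∑ d ∈ (Icc 1 N).filter (fun d => ¬ d.Prime),
        ∑ m ∈ Icc 1 (N / d), ((Λ d : ℝ):ℂ) * f (d * m)‖ ≤ 8 * y := by
      have hterm : ∀ d ∈ (Icc 1 N).filter (fun d => ¬ d.Prime),
          ‖∑ m ∈ Icc 1 (N / d), ((Λ d : ℝ):ℂ) * f (d * m)‖ ≤ (N:ℝ) * (Λ d / d) := by
        intro d hd
        obtain ⟨hdI, _⟩ := Finset.mem_filter.1 hd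
        obtain ⟨hd1, _⟩ := Finset.mem_Icc.1 hdI
        have hd0 : (0:ℝ) < d := by exact_mod_cast hd1
        have hΛ : 0 ≤ Λ d := vonMangoldt_nonneg
        calc ‖∑ m ∈ Icc 1 (N / d), ((Λ d : ℝ):ℂ) * f (d * m)‖
            ≤ ∑ m ∈ Icc 1 (N / d), ‖((Λ d : ℝ):ℂ) * f (d * m)‖ := norm_sum_le _ _
          _ ≤ ∑ m ∈ Icc 1 (N / d), Λ d := by
              apply Finset.sum_le_sum
              intro m _
              rw [norm_mul, Complex.norm_real, Real.norm_eq_abs, abs_of_nonneg hΛ]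
              calc Λ d * ‖f (d * m)‖ ≤ Λ d * 1 := mul_le_mul_of_nonneg_left (hb _) hΛ
                _ = Λ d := mul_one _
          _ = ((N / d : ℕ):ℝ) * Λ d := by
              rw [Finset.sum_const, Nat.card_Icc]; simp [nsmul_eq_mul]
          _ ≤ ((N:ℝ) / d) * Λ d := mul_le_mul_of_nonneg_right Nat.cast_div_le hΛ
          _ = (N:ℝ) * (Λ d / d) := by ring
      calc ‖∑ d ∈ (Icc 1 N).filter (fun d => ¬ d.Prime), ∑ m ∈ Icc 1 (N / d), ((Λ d : ℝ):ℂ) * f (d * m)‖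
          ≤ ∑ d ∈ (Icc 1 N).filter (fun d => ¬ d.Prime), (N:ℝ) * (Λ d / d) :=
            le_trans (norm_sum_le _ _) (Finset.sum_le_sum hterm)
        _ = (N:ℝ) * ∑ d ∈ (Icc 1 N).filter (fun d => ¬ d.Prime), Λ d / d := by
            rw [Finset.mul_sum]
        _ ≤ (N:ℝ) * 8 := mul_le_mul_of_nonneg_left (pp_bound N) (by positivity)
        _ ≤ 8 * y := by nlinarith
    calc ‖(∑ q ∈ (Icc 1 N).filter Nat.Prime,
            (∑ m ∈ Icc 1 (N / q), ((Λ q : ℝ):ℂ) * f (q * m)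
              - ((Real.log q : ℝ):ℂ) * f q * ∑ m ∈ Icc 1 (N / q), f m))
          + ∑ d ∈ (Icc 1 N).filter (fun d => ¬ d.Prime), ∑ m ∈ Icc 1 (N / d), ((Λ d : ℝ):ℂ) * f (d * m)‖
        ≤ _ + _ := norm_add_le _ _
      _ ≤ 8 * y + 8 * y := add_le_add hprime hnonprime
      _ = 16 * y := by ring
  -- combine
  calc ‖(∑ n ∈ Icc 1 N, f n) * ((Real.log y : ℝ):ℂ)
        - ∑ q ∈ primesUpTo y, ((Real.log q : ℝ):ℂ) * f q * ∑ m ∈ Icc 1 (N / q), f m‖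
      ≤ ‖(∑ n ∈ Icc 1 N, f n) * ((Real.log y : ℝ):ℂ) - ∑ n ∈ Icc 1 N, f n * ((Real.log n : ℝ):ℂ)‖
        + ‖(∑ n ∈ Icc 1 N, f n * ((Real.log n : ℝ):ℂ))
            - ∑ q ∈ primesUpTo y, ((Real.log q : ℝ):ℂ) * f q * ∑ m ∈ Icc 1 (N / q), f m‖ := by
          apply norm_sub_le_norm_sub_add_norm_sub
    _ ≤ y + 16 * y := by
        apply add_le_add hstep1
        rw [hstep2]
        exact hstep3
    _ = 17 * y := by ring

/-- numeric: e ≤ log 16 -/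
lemma exp_one_le_log16 : Real.exp 1 ≤ Real.log 16 := by
  have h1 : Real.log 16 = 4 * Real.log 2 := by
    rw [show (16:ℝ) = 2^4 by norm_num, Real.log_pow]
    norm_num
  have h2 := Real.log_two_gt_d9
  have h3 := Real.exp_one_lt_d9
  rw [h1]
  nlinarith

lemma loglog_ge_one {x : ℝ} (hx : 16 ≤ x) : 1 ≤ Real.log (Real.log x) := by
  have h1 : Real.exp 1 ≤ Real.log x :=
    le_trans exp_one_le_log16 (Real.log_le_log (by norm_num) hx)
  calc (1:ℝ) = Real.log (Real.exp 1) := (Real.log_exp 1).symm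
    _ ≤ Real.log (Real.log x) := Real.log_le_log (Real.exp_pos 1) h1

lemma logx_pos {x : ℝ} (hx : 16 ≤ x) : 0 < Real.log x :=
  lt_of_lt_of_le (Real.exp_pos 1) (le_trans exp_one_le_log16 (Real.log_le_log (by norm_num) hx))

lemma log4_le_two : Real.log 4 ≤ 2 := by
  have h2 : (4:ℝ) ≤ Real.exp 2 := by
    have := Real.exp_one_gt_d9
    have hsq : Real.exp 2 = Real.exp 1 * Real.exp 1 := by
      rw [← Real.exp_add]; norm_num
    nlinarith
  calc Real.log 4 ≤ Real.log (Real.exp 2) := Real.log_le_log (by norm_num) h2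
    _ = 2 := Real.log_exp 2

/-- Main trimming lemma -/
lemma main_trim (f : ℕ → ℂ) (hmult : ∀ m n : ℕ, Nat.Coprime m n → f (m*n) = f m * f n)
    (hb : ∀ n : ℕ, ‖f n‖ ≤ 1) (x : ℝ) (hx : 16 ≤ x) :
    ‖(∑ n ∈ Icc 1 ⌊x⌋₊, f n) * ((Real.log x : ℝ):ℂ) -
      ∑ p ∈ (Icc 1 ⌊x⌋₊).filter
          (fun p : ℕ => p.Prime ∧ (Real.log x)^4 < (p:ℝ) ∧ (p:ℝ) ≤ x/2),
        ((Real.log p : ℝ):ℂ) * f p * ∑ m ∈ Icc 1 (⌊x⌋₊ / p), f m‖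
      ≤ 25 * (x * Real.log (Real.log x)) := by
  set N := ⌊x⌋₊ with hNdef
  set P := (Icc 1 N).filter (fun p : ℕ => p.Prime ∧ (Real.log x)^4 < (p:ℝ) ∧ (p:ℝ) ≤ x/2) with hP
  have hx1 : (1:ℝ) ≤ x := by linarith
  have hllx := loglog_ge_one hx
  have hlx := logx_pos hx
  have hNx : (N:ℝ) ≤ x := Nat.floor_le (by linarith)
  have hE1 := lemA f hmult hb x hx1
  have hPsub : P ⊆ primesUpTo x := by
    intro p hp
    simp only [hP, Finset.mem_filter] at hp
    exact Finset.mem_filter.2 ⟨hp.1, hp.2.1⟩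
  have hsd : ∑ q ∈ primesUpTo x, ((Real.log q : ℝ):ℂ) * f q * ∑ m ∈ Icc 1 (N / q), f m
      - ∑ p ∈ P, ((Real.log p : ℝ):ℂ) * f p * ∑ m ∈ Icc 1 (N / p), f m
      = ∑ p ∈ primesUpTo x \ P, ((Real.log p : ℝ):ℂ) * f p * ∑ m ∈ Icc 1 (N / p), f m := by
    rw [← Finset.sum_sdiff hPsub]
    ring
  -- bound the trimmed part
  have htermbd : ∀ p ∈ primesUpTo x, ‖((Real.log p : ℝ):ℂ) * f p * ∑ m ∈ Icc 1 (N / p), f m‖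
      ≤ Real.log p * ((N / p : ℕ):ℝ) := by
    intro p hp
    have hpp := (Finset.mem_filter.1 hp).2
    have hlogp : 0 ≤ Real.log p := Real.log_nonneg (by exact_mod_cast hpp.one_lt.le)
    calc ‖((Real.log p : ℝ):ℂ) * f p * ∑ m ∈ Icc 1 (N / p), f m‖
        = ‖((Real.log p : ℝ):ℂ)‖ * ‖f p‖ * ‖∑ m ∈ Icc 1 (N / p), f m‖ := by
          rw [norm_mul, norm_mul]
      _ ≤ Real.log p * 1 * ((N / p : ℕ):ℝ) := by
          apply mul_le_mul
          · apply mul_le_mul _ (hb p) (norm_nonneg _) hlogp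
            rw [Complex.norm_real, Real.norm_eq_abs, abs_of_nonneg hlogp]
          · exact sumf_le f hb _
          · exact norm_nonneg _
          · positivity
      _ = Real.log p * ((N / p : ℕ):ℝ) := by ring
  have htrim : ∑ p ∈ primesUpTo x \ P, Real.log p * ((N / p : ℕ):ℝ)
      ≤ 6 * (x * Real.log (Real.log x)) + 2 * x := by
    set D := primesUpTo x \ P with hD
    have hsplit : ∑ p ∈ D, Real.log p * ((N / p : ℕ):ℝ)
        = ∑ p ∈ D.filter (fun p : ℕ => (p:ℝ) ≤ (Real.log x)^4), Real.log p * ((N / p : ℕ):ℝ)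
          + ∑ p ∈ D.filter (fun p : ℕ => ¬ ((p:ℝ) ≤ (Real.log x)^4)), Real.log p * ((N / p : ℕ):ℝ) := by
      rw [Finset.sum_filter_add_sum_filter_not]
    have hnn : ∀ p ∈ primesUpTo x, 0 ≤ Real.log p * ((N / p : ℕ):ℝ) := by
      intro p hp
      have hpp := (Finset.mem_filter.1 hp).2
      have : 0 ≤ Real.log p := Real.log_nonneg (by exact_mod_cast hpp.one_lt.le)
      positivity
    -- small primes
    have hsmall : ∑ p ∈ D.filter (fun p : ℕ => (p:ℝ) ≤ (Real.log x)^4), Real.log p * ((N / p : ℕ):ℝ)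
        ≤ 6 * (x * Real.log (Real.log x)) := by
      have hsub : D.filter (fun p : ℕ => (p:ℝ) ≤ (Real.log x)^4) ⊆ primesUpTo ((Real.log x)^4) := by
        intro p hp
        obtain ⟨hpD, hple⟩ := Finset.mem_filter.1 hp
        have hpx : p ∈ primesUpTo x := (Finset.mem_sdiff.1 hpD).1
        obtain ⟨hpI, hpp⟩ := Finset.mem_filter.1 hpx
        refine Finset.mem_filter.2 ⟨Finset.mem_Icc.2 ⟨hpp.one_lt.le, ?_⟩, hpp⟩
        exact Nat.le_floor hple
      have hlx1 : (1:ℝ) ≤ Real.log x := by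
        have := le_trans exp_one_le_log16 (Real.log_le_log (by norm_num) hx)
        nlinarith [Real.exp_one_gt_d9]
      have hsq : (1:ℝ) ≤ (Real.log x)^2 := by nlinarith
      have hL1 : (1:ℝ) ≤ (Real.log x)^4 := by nlinarith
      have h1 : ∑ p ∈ primesUpTo ((Real.log x)^4), Real.log p * ((N / p : ℕ):ℝ)
          ≤ (N:ℝ) * ∑ p ∈ primesUpTo ((Real.log x)^4), Real.log p / p := by
        rw [Finset.mul_sum]
        apply Finset.sum_le_sum
        intro p hp
        have hpp := (Finset.mem_filter.1 hp).2
        have hp0 : (0:ℝ) < p := by exact_mod_cast hpp.pos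
        have hlogp : 0 ≤ Real.log p := Real.log_nonneg (by exact_mod_cast hpp.one_lt.le)
        calc Real.log p * ((N / p : ℕ):ℝ) ≤ Real.log p * ((N:ℝ)/p) :=
              mul_le_mul_of_nonneg_left Nat.cast_div_le hlogp
          _ = (N:ℝ) * (Real.log p / p) := by ring
      have h2 := mertens_up ((Real.log x)^4) hL1
      have h3 : Real.log ((Real.log x)^4) = 4 * Real.log (Real.log x) := by
        rw [Real.log_pow]; norm_num
      have h4 : ∑ p ∈ primesUpTo ((Real.log x)^4), Real.log p / p
          ≤ 4 * Real.log (Real.log x) + 2 := by rw [← h3]; exact h2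
      have h5 : ∑ p ∈ D.filter (fun p : ℕ => (p:ℝ) ≤ (Real.log x)^4), Real.log p * ((N / p : ℕ):ℝ)
          ≤ ∑ p ∈ primesUpTo ((Real.log x)^4), Real.log p * ((N / p : ℕ):ℝ) := by
        apply Finset.sum_le_sum_of_subset_of_nonneg hsub
        intro p hp _
        have hpp := (Finset.mem_filter.1 hp).2
        have : 0 ≤ Real.log p := Real.log_nonneg (by exact_mod_cast hpp.one_lt.le)
        positivity
      have hN0 : (0:ℝ) ≤ N := by positivity
      calc ∑ p ∈ D.filter (fun p : ℕ => (p:ℝ) ≤ (Real.log x)^4), Real.log p * ((N / p : ℕ):ℝ)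
          ≤ (N:ℝ) * (4 * Real.log (Real.log x) + 2) := by
            refine le_trans h5 (le_trans h1 ?_)
            exact mul_le_mul_of_nonneg_left h4 hN0
        _ ≤ x * (4 * Real.log (Real.log x) + 2) := by
            apply mul_le_mul_of_nonneg_right hNx (by linarith)
        _ ≤ 6 * (x * Real.log (Real.log x)) := by nlinarith
    -- large primes
    have hlarge : ∑ p ∈ D.filter (fun p : ℕ => ¬ ((p:ℝ) ≤ (Real.log x)^4)), Real.log p * ((N / p : ℕ):ℝ)
        ≤ 2 * x := by
      have hbd : ∀ p ∈ D.filter (fun p : ℕ => ¬ ((p:ℝ) ≤ (Real.log x)^4)),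
          Real.log p * ((N / p : ℕ):ℝ) ≤ Real.log p := by
        intro p hp
        obtain ⟨hpD, hpgt⟩ := Finset.mem_filter.1 hp
        obtain ⟨hpx, hpnP⟩ := Finset.mem_sdiff.1 hpD
        obtain ⟨hpI, hpp⟩ := Finset.mem_filter.1 hpx
        have hlogp : 0 ≤ Real.log p := Real.log_nonneg (by exact_mod_cast hpp.one_lt.le)
        have hpbig : x/2 < (p:ℝ) := by
          by_contra hle
          push_neg at hle
          exact hpnP (Finset.mem_filter.2 ⟨hpI, hpp, lt_of_not_ge hpgt, hle⟩)
        have hdiv1 : (N / p : ℕ) ≤ 1 := by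
          have hxlt : (N:ℝ) < 2 * p := by linarith
          have h2 : N < 2 * p := by exact_mod_cast hxlt
          exact Nat.lt_succ_iff.mp ((Nat.div_lt_iff_lt_mul hpp.pos).2 (by omega))
        calc Real.log p * ((N / p : ℕ):ℝ) ≤ Real.log p * 1 := by
              apply mul_le_mul_of_nonneg_left _ hlogp
              exact_mod_cast hdiv1
          _ = Real.log p := mul_one _
      calc ∑ p ∈ D.filter (fun p : ℕ => ¬ ((p:ℝ) ≤ (Real.log x)^4)), Real.log p * ((N / p : ℕ):ℝ)
          ≤ ∑ p ∈ D.filter (fun p : ℕ => ¬ ((p:ℝ) ≤ (Real.log x)^4)), Real.log p :=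
            Finset.sum_le_sum hbd
        _ ≤ ∑ p ∈ primesUpTo x, Real.log p := by
            apply Finset.sum_le_sum_of_subset_of_nonneg
            · exact subset_trans (Finset.filter_subset _ _) (Finset.sdiff_subset)
            · intro p hp _
              have hpp := (Finset.mem_filter.1 hp).2
              exact Real.log_nonneg (by exact_mod_cast hpp.one_lt.le)
        _ ≤ x * Real.log 4 := theta_le_s18 x (by linarith)
        _ ≤ 2 * x := by nlinarith [log4_le_two]
    rw [hsplit]
    linarith
  have hD : ‖∑ p ∈ primesUpTo x \ P, ((Real.log p : ℝ):ℂ) * f p * ∑ m ∈ Icc 1 (N / p), f m‖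
      ≤ 6 * (x * Real.log (Real.log x)) + 2 * x := by
    calc ‖∑ p ∈ primesUpTo x \ P, ((Real.log p : ℝ):ℂ) * f p * ∑ m ∈ Icc 1 (N / p), f m‖
        ≤ ∑ p ∈ primesUpTo x \ P, Real.log p * ((N / p : ℕ):ℝ) := by
          refine le_trans (norm_sum_le _ _) (Finset.sum_le_sum ?_)
          intro p hp
          exact htermbd p (Finset.mem_sdiff.1 hp).1
      _ ≤ _ := htrim
  calc ‖(∑ n ∈ Icc 1 N, f n) * ((Real.log x : ℝ):ℂ) -
        ∑ p ∈ P, ((Real.log p : ℝ):ℂ) * f p * ∑ m ∈ Icc 1 (N / p), f m‖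
      ≤ ‖(∑ n ∈ Icc 1 N, f n) * ((Real.log x : ℝ):ℂ) -
          ∑ q ∈ primesUpTo x, ((Real.log q : ℝ):ℂ) * f q * ∑ m ∈ Icc 1 (N / q), f m‖
        + ‖∑ q ∈ primesUpTo x, ((Real.log q : ℝ):ℂ) * f q * ∑ m ∈ Icc 1 (N / q), f m
            - ∑ p ∈ P, ((Real.log p : ℝ):ℂ) * f p * ∑ m ∈ Icc 1 (N / p), f m‖ :=
        norm_sub_le_norm_sub_add_norm_sub _ _ _
    _ ≤ 17 * x + (6 * (x * Real.log (Real.log x)) + 2 * x) := by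
        apply add_le_add hE1
        rw [hsd]
        exact hD
    _ ≤ 25 * (x * Real.log (Real.log x)) := by nlinarith

lemma Pk_disjoint (x : ℝ) (hx : 16 ≤ x) {k j : ℕ} (hkj : k < j) :
    Disjoint (Pk x k) (Pk x j) := by
  rw [Finset.disjoint_left]
  intro p hpk hpj
  simp only [Pk, Finset.mem_filter] at hpk hpj
  obtain ⟨_, _, _, _, _, hk2⟩ := hpk
  obtain ⟨_, _, _, _, hj1, _⟩ := hpj
  have hx1 : (1:ℝ) < x := by linarith
  have hexp : Real.exp (1 - (j:ℝ)) ≤ Real.exp (-(k:ℝ)) := by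
    apply Real.exp_le_exp.2
    have : (k:ℝ) + 1 ≤ (j:ℝ) := by exact_mod_cast hkj
    linarith
  have hmono : x ^ (1 - Real.exp (-(k:ℝ))) ≤ x ^ (1 - Real.exp (1 - (j:ℝ))) :=
    (Real.rpow_le_rpow_left_iff hx1).2 (by linarith)
  linarith

lemma exp_neg_one_le_log_two : Real.exp (-1 : ℝ) ≤ Real.log 2 := by
  have h1 : Real.exp (-1:ℝ) = 1 / Real.exp 1 := by
    rw [Real.exp_neg]; ring
  have h2 := Real.exp_one_gt_d9
  have h3 := Real.log_two_gt_d9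
  have h4 : 1 / Real.exp 1 ≤ 1 / 2 := by
    apply div_le_div_of_nonneg_left (by norm_num) (by norm_num)
    linarith
  linarith

lemma partitionP (x : ℝ) (hx : 16 ≤ x) :
    (Icc 1 ⌊x⌋₊).filter (fun p : ℕ => p.Prime ∧ (Real.log x)^4 < (p:ℝ) ∧ (p:ℝ) ≤ x/2)
      = (Icc 1 (⌈Real.log (Real.log x)⌉₊ + 1)).biUnion (Pk x) := by
  have hx0 : (0:ℝ) < x := by linarith
  have hlx := logx_pos hx
  have hlx1 : (1:ℝ) ≤ Real.log x := by
    have := le_trans exp_one_le_log16 (Real.log_le_log (by norm_num) hx)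
    nlinarith [Real.exp_one_gt_d9]
  have hllx := loglog_ge_one hx
  have hlog2 : (0:ℝ) < Real.log 2 := Real.log_pos (by norm_num)
  ext p
  simp only [Finset.mem_biUnion, Finset.mem_filter, Finset.mem_Icc, Pk]
  constructor
  · rintro ⟨⟨hp1, hpN⟩, hpp, hp4, hp2⟩
    have hppos : (0:ℝ) < p := by exact_mod_cast hpp.pos
    have hp1' : (1:ℝ) < p := by
      have hsq : (1:ℝ) ≤ (Real.log x)^2 := by nlinarith
      have : (1:ℝ) ≤ (Real.log x)^4 := by nlinarith
      linarith
    have hlogp : 0 < Real.log p := Real.log_pos hp1'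
    have hlogp_le : Real.log p ≤ Real.log x - Real.log 2 := by
      calc Real.log p ≤ Real.log (x/2) := Real.log_le_log hppos hp2
        _ = Real.log x - Real.log 2 := Real.log_div (by positivity) (by norm_num)
    set t : ℝ := 1 - Real.log p / Real.log x with ht
    have ht_ge : Real.log 2 / Real.log x ≤ t := by
      rw [ht, le_sub_iff_add_le, ← add_div, div_le_one hlx]
      linarith
    have ht_pos : 0 < t := lt_of_lt_of_le (by positivity) ht_ge
    have ht_lt1 : t < 1 := by
      rw [ht]
      have : 0 < Real.log p / Real.log x := by positivity
      linarith
    set yv : ℝ := -Real.log t with hyv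
    have hyv_pos : 0 < yv := by
      rw [hyv, neg_pos]
      exact Real.log_neg ht_pos ht_lt1
    refine ⟨⌈yv⌉₊, ⟨Nat.one_le_ceil_iff.2 hyv_pos, ?_⟩, ⟨hp1, hpN⟩, hpp, hp4, hp2, ?_, ?_⟩
    · -- k ≤ K
      have hinv : t⁻¹ ≤ Real.log x / Real.log 2 := by
        rw [← one_div, div_le_div_iff₀ ht_pos hlog2]
        calc 1 * Real.log 2 = Real.log 2 := one_mul _
          _ ≤ Real.log x * t := by
              rw [div_le_iff₀ hlx] at ht_ge
              linarith [mul_comm t (Real.log x)]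
      have hyv_le : yv ≤ Real.log (Real.log x) + 1 := by
        have h1 : yv = Real.log t⁻¹ := by rw [hyv, Real.log_inv]
        have h2 : Real.log t⁻¹ ≤ Real.log (Real.log x / Real.log 2) :=
          Real.log_le_log (by positivity) hinv
        have h3 : Real.log (Real.log x / Real.log 2) = Real.log (Real.log x) - Real.log (Real.log 2) :=
          Real.log_div (by positivity) (by positivity)
        have h4 : -Real.log (Real.log 2) ≤ 1 := by
          have h5 : Real.exp (-1:ℝ) ≤ Real.log 2 := exp_neg_one_le_log_two
          have h6 : Real.log (Real.exp (-1:ℝ)) ≤ Real.log (Real.log 2) :=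
            Real.log_le_log (Real.exp_pos _) h5
          rw [Real.log_exp] at h6
          linarith
        linarith
      calc ⌈yv⌉₊ ≤ ⌈Real.log (Real.log x) + 1⌉₊ := Nat.ceil_le_ceil hyv_le
        _ = ⌈Real.log (Real.log x)⌉₊ + 1 := Nat.ceil_add_one (by linarith)
    · -- x^(1-exp(1-k)) < p
      have hk_lt : (⌈yv⌉₊ : ℝ) < yv + 1 := Nat.ceil_lt_add_one hyv_pos.le
      have hexp : t < Real.exp (1 - (⌈yv⌉₊:ℝ)) := by
        have h1 : -yv < 1 - (⌈yv⌉₊:ℝ) := by linarith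
        calc t = Real.exp (Real.log t) := (Real.exp_log ht_pos).symm
          _ = Real.exp (-yv) := by rw [hyv]; ring_nf
          _ < Real.exp (1 - (⌈yv⌉₊:ℝ)) := Real.exp_lt_exp.2 h1
      have hlog_ineq : (1 - Real.exp (1 - (⌈yv⌉₊:ℝ))) * Real.log x < Real.log p := by
        have h1 : 1 - Real.exp (1 - (⌈yv⌉₊:ℝ)) < 1 - t := by linarith
        have h2 : (1 - t) * Real.log x = Real.log p := by
          rw [ht]; field_simp; ring
        nlinarith
      have hrpow_pos : (0:ℝ) < x ^ (1 - Real.exp (1 - (⌈yv⌉₊:ℝ))) := Real.rpow_pos_of_pos hx0 _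
      rw [← Real.log_lt_log_iff hrpow_pos hppos, Real.log_rpow hx0]
      exact hlog_ineq
    · -- p ≤ x^(1-exp(-k))
      have hyv_le_k : yv ≤ (⌈yv⌉₊ : ℝ) := Nat.le_ceil yv
      have hexp : Real.exp (-(⌈yv⌉₊:ℝ)) ≤ t := by
        calc Real.exp (-(⌈yv⌉₊:ℝ)) ≤ Real.exp (-yv) := Real.exp_le_exp.2 (by linarith)
          _ = Real.exp (Real.log t) := by rw [hyv]; ring_nf
          _ = t := Real.exp_log ht_pos
      rw [Real.le_rpow_iff_log_le hppos hx0]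
      have h2 : (1 - t) * Real.log x = Real.log p := by
        rw [ht]; field_simp; ring
      nlinarith
  · rintro ⟨k, _, hIcc, hpp, hp4, hp2, _, _⟩
    exact ⟨hIcc, hpp, hp4, hp2⟩

/-- Interval Mertens bound for `Pk` -/
lemma mertens_Pk (x : ℝ) (hx : 16 ≤ x) (k : ℕ) :
    ∑ p ∈ Pk x k, Real.log p / p
      ≤ (Real.exp (1 - (k:ℝ)) - Real.exp (-(k:ℝ))) * Real.log x + 13 := by
  have hx0 : (0:ℝ) < x := by linarith
  have hx1 : (1:ℝ) ≤ x := by linarith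
  have hlx := logx_pos hx
  set A := x ^ (1 - Real.exp (1 - (k:ℝ))) with hA
  set B := x ^ (1 - Real.exp (-(k:ℝ))) with hB
  have hApos : 0 < A := Real.rpow_pos_of_pos hx0 _
  have hBpos : 0 < B := Real.rpow_pos_of_pos hx0 _
  have hexp_le : Real.exp (-(k:ℝ)) ≤ Real.exp (1 - (k:ℝ)) := Real.exp_le_exp.2 (by linarith)
  have hAB : A ≤ B := by
    rcases eq_or_lt_of_le hx1 with h | h
    · rw [hA, hB, ← h]; simp [Real.one_rpow]
    · exact (Real.rpow_le_rpow_left_iff h).2 (by linarith)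
  -- 1 ≤ A requires exp(1-k) ≤ 1 i.e. k ≥ 1; for k = 0, Pk x 0 is empty-ish? handle:
  rcases Nat.eq_zero_or_pos k with hk0 | hk1
  · -- k = 0 : then x^(1-e) < p and p ≤ x^(1-1) = x^0 = 1 gives contradiction with p prime
    subst hk0
    have hempty : Pk x 0 = ∅ := by
      apply Finset.eq_empty_of_forall_notMem
      intro p hp
      simp only [Pk, Finset.mem_filter] at hp
      obtain ⟨_, hpp, _, _, _, hle⟩ := hp
      have : x ^ (1 - Real.exp (-(0:ℕ):ℝ)) = 1 := by
        norm_num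
      rw [this] at hle
      have := hpp.one_lt
      have : (1:ℝ) < p := by exact_mod_cast this
      linarith
    rw [hempty]
    simp only [Finset.sum_empty, Nat.cast_zero, neg_zero, Real.exp_zero, sub_zero]
    nlinarith [Real.add_one_le_exp (1:ℝ), logx_pos hx]
  · have hk1' : (1:ℝ) ≤ (k:ℝ) := by exact_mod_cast hk1
    have hA1 : 1 ≤ A := by
      rw [hA, Real.rpow_def_of_pos hx0]
      have he1 : Real.exp (1 - (k:ℝ)) ≤ 1 := by
        have : Real.exp (1 - (k:ℝ)) ≤ Real.exp 0 := Real.exp_le_exp.2 (by linarith)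
        simpa using this
      have h0 : 0 ≤ Real.log x * (1 - Real.exp (1 - (k:ℝ))) := by nlinarith
      calc (1:ℝ) = Real.exp 0 := Real.exp_zero.symm
        _ ≤ Real.exp (Real.log x * (1 - Real.exp (1 - (k:ℝ)))) := Real.exp_le_exp.2 h0
    have hB1 : 1 ≤ B := le_trans hA1 hAB
    have hdisj : Disjoint (Pk x k) (primesUpTo A) := by
      rw [Finset.disjoint_left]
      intro p hp hpA
      simp only [Pk, Finset.mem_filter] at hp
      obtain ⟨_, _, _, _, hgt, _⟩ := hp
      obtain ⟨hpI, _⟩ := Finset.mem_filter.1 hpA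
      obtain ⟨_, hple⟩ := Finset.mem_Icc.1 hpI
      have : (p:ℝ) ≤ A := by
        calc (p:ℝ) ≤ (⌊A⌋₊:ℝ) := by exact_mod_cast hple
          _ ≤ A := Nat.floor_le hApos.le
      linarith
    have hsubU : Pk x k ∪ primesUpTo A ⊆ primesUpTo B := by
      intro p hp
      rcases Finset.mem_union.1 hp with h | h
      · simp only [Pk, Finset.mem_filter] at h
        obtain ⟨hpI, hpp, _, _, _, hle⟩ := h
        exact Finset.mem_filter.2 ⟨Finset.mem_Icc.2 ⟨hpp.one_lt.le, Nat.le_floor hle⟩, hpp⟩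
      · obtain ⟨hpI, hpp⟩ := Finset.mem_filter.1 h
        obtain ⟨h1, h2⟩ := Finset.mem_Icc.1 hpI
        refine Finset.mem_filter.2 ⟨Finset.mem_Icc.2 ⟨h1, ?_⟩, hpp⟩
        exact le_trans h2 (Nat.floor_le_floor hAB)
    have hnn : ∀ p ∈ primesUpTo B, 0 ≤ Real.log p / p := by
      intro p hp
      have hpp := (Finset.mem_filter.1 hp).2
      have h1 : (1:ℝ) ≤ p := by exact_mod_cast hpp.one_lt.le
      have := Real.log_nonneg h1
      positivity
    have hchain : ∑ p ∈ Pk x k, Real.log p / p + ∑ p ∈ primesUpTo A, Real.log p / p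
        ≤ ∑ p ∈ primesUpTo B, Real.log p / p := by
      rw [← Finset.sum_union hdisj]
      exact Finset.sum_le_sum_of_subset_of_nonneg hsubU (fun p hp _ => hnn p hp)
    have hup := mertens_up B hB1
    have hlow := mertens_low A hA1
    have hlogA : Real.log A = (1 - Real.exp (1 - (k:ℝ))) * Real.log x := Real.log_rpow hx0 _
    have hlogB : Real.log B = (1 - Real.exp (-(k:ℝ))) * Real.log x := Real.log_rpow hx0 _
    rw [hlogA] at hlow
    rw [hlogB] at hup
    nlinarith

/-- Sk as a weighted sum of the inner double sums -/
lemma Sk_eq (f : ℕ → ℂ) (x : ℝ) (hx : 16 ≤ x) (k : ℕ) :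
    Sk f x k = ∑ p ∈ Pk x k,
      (f p * ((Real.log p : ℝ):ℂ) / ((Real.log (x / p) : ℝ):ℂ)) *
        ∑ q ∈ primesUpTo (x / p), ((Real.log q : ℝ):ℂ) * f q *
          ∑ m ∈ Icc 1 (⌊x⌋₊ / p / q), f m := by
  unfold Sk
  apply Finset.sum_congr rfl
  intro p hp
  rw [Finset.mul_sum]
  apply Finset.sum_congr rfl
  intro q hq
  have hflr : ⌊x / ((p:ℝ) * q)⌋₊ = ⌊x⌋₊ / p / q := by
    rw [show x / ((p:ℝ) * q) = x / (p:ℝ) / (q:ℝ) by ring, Nat.floor_div_natCast, Nat.floor_div_natCast]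
  rw [hflr]
  simp only [Finset.mul_sum]
  apply Finset.sum_congr rfl
  intro m _
  ring


theorem stmt18 :
    ∃ C : ℝ, ∃ K₀ : ℕ, 0 < C ∧ ∀ x : ℝ, 16 ≤ x →
      ∀ f : ℕ → ℂ, f 1 = 1 →
      (∀ m n : ℕ, Nat.Coprime m n → f (m * n) = f m * f n) →
      (∀ n : ℕ, ‖f n‖ ≤ 1) →
      ‖∑ n ∈ Finset.Icc 1 ⌊x⌋₊, f n‖ ≤
        C * ((1 / Real.log x) *
              ∑ k ∈ Finset.Icc 1 (⌈Real.log (Real.log x)⌉₊ + K₀),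
                ‖Sk f x k‖ +
            x * Real.log (Real.log x) / Real.log x) := by

  refine ⟨7000, 1, by norm_num, ?_⟩
  intro x hx f hf1 hmult habs
  have hb : ∀ n, ‖f n‖ ≤ 1 := fun n => by exact habs n
  have hx0 : (0:ℝ) < x := by linarith
  have hlx := logx_pos hx
  have hllx := loglog_ge_one hx
  set N := ⌊x⌋₊ with hN
  set K := ⌈Real.log (Real.log x)⌉₊ + 1 with hK
  set P := (Icc 1 N).filter (fun p : ℕ => p.Prime ∧ (Real.log x)^4 < (p:ℝ) ∧ (p:ℝ) ≤ x/2) with hP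
  set term : ℕ → ℂ := fun p => ((Real.log p : ℝ):ℂ) * f p * ∑ m ∈ Icc 1 (N / p), f m with hterm
  have hmain := main_trim f hmult hb x hx
  have hdisjKS : (↑(Icc 1 K) : Set ℕ).PairwiseDisjoint (Pk x) := by
    intro k hk j hj hkj
    rcases lt_or_gt_of_ne hkj with h | h
    · exact Pk_disjoint x hx h
    · exact (Pk_disjoint x hx h).symm
  have hBsum : ∑ p ∈ P, term p = ∑ k ∈ Icc 1 K, ∑ p ∈ Pk x k, term p := by
    rw [hP, partitionP x hx]
    exact Finset.sum_biUnion hdisjKS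
  -- e^k bound
  have hek : ∀ k ∈ Icc 1 K, Real.exp (k:ℝ) ≤ 8 * Real.log x := by
    intro k hk
    obtain ⟨_, hk2⟩ := Finset.mem_Icc.1 hk
    have h1 : (k:ℝ) ≤ Real.log (Real.log x) + 2 := by
      have h2 : (k:ℝ) ≤ (K:ℝ) := by exact_mod_cast hk2
      have h3 : (⌈Real.log (Real.log x)⌉₊:ℝ) < Real.log (Real.log x) + 1 :=
        Nat.ceil_lt_add_one (by linarith)
      have h4 : (K:ℝ) = (⌈Real.log (Real.log x)⌉₊:ℝ) + 1 := by rw [hK]; push_cast; ring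
      linarith
    calc Real.exp (k:ℝ) ≤ Real.exp (Real.log (Real.log x) + 2) := Real.exp_le_exp.2 h1
      _ = Real.log x * Real.exp 2 := by
          rw [Real.exp_add, Real.exp_log hlx]
      _ ≤ 8 * Real.log x := by
          have h5 := Real.exp_one_lt_d9
          have h6 : Real.exp 2 = Real.exp 1 * Real.exp 1 := by rw [← Real.exp_add]; norm_num
          have h7 : Real.exp 2 ≤ 8 := by nlinarith [Real.exp_pos 1]
          have h8 : Real.log x * Real.exp 2 ≤ Real.log x * 8 :=
            mul_le_mul_of_nonneg_left h7 hlx.le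
          linarith
  -- per k bound
  have hperk : ∀ k ∈ Icc 1 K, ‖(∑ p ∈ Pk x k, term p) - Sk f x k‖ ≤ 2000 * x := by
    intro k hk
    rw [Sk_eq f x hx k, ← Finset.sum_sub_distrib]
    have hptermbd : ∀ p ∈ Pk x k,
        ‖term p - (f p * ((Real.log p : ℝ):ℂ) / ((Real.log (x / p) : ℝ):ℂ)) *
          ∑ q ∈ primesUpTo (x / p), ((Real.log q : ℝ):ℂ) * f q *
            ∑ m ∈ Icc 1 (N / p / q), f m‖
        ≤ 17 * x * (Real.exp (k:ℝ) / Real.log x) * (Real.log p / p) := by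
      intro p hp
      simp only [Pk, Finset.mem_filter] at hp
      obtain ⟨hpI, hpp, hp4, hp2, hpgt, hple⟩ := hp
      have hppos : (0:ℝ) < p := by exact_mod_cast hpp.pos
      have hp1' : (1:ℝ) < p := by exact_mod_cast hpp.one_lt
      have hlogp : 0 ≤ Real.log p := Real.log_nonneg (by linarith)
      set y := x / (p:ℝ) with hy
      have hy2 : 2 ≤ y := by
        rw [hy, le_div_iff₀ hppos]
        linarith
      have hy1 : 1 ≤ y := by linarith
      have hfloor : ⌊y⌋₊ = N / p := by rw [hy, Nat.floor_div_natCast]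
      have hlogy_pos : 0 < Real.log y := Real.log_pos (by linarith)
      have hlogy_ge : Real.exp (-(k:ℝ)) * Real.log x ≤ Real.log y := by
        have h1 : Real.log p ≤ (1 - Real.exp (-(k:ℝ))) * Real.log x :=
          (Real.le_rpow_iff_log_le hppos hx0).1 hple
        have h2 : Real.log y = Real.log x - Real.log p := by
          rw [hy, Real.log_div (by positivity) (by positivity)]
        linarith
      have hlemA := lemA f hmult hb y hy1
      rw [hfloor] at hlemA
      set W := ∑ q ∈ primesUpTo y, ((Real.log q : ℝ):ℂ) * f q *
          ∑ m ∈ Icc 1 (N / p / q), f m with hW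
      have hWlem : ‖(∑ n ∈ Icc 1 (N/p), f n) * ((Real.log y : ℝ):ℂ) - W‖ ≤ 17 * y := hlemA
      set c : ℂ := f p * ((Real.log p : ℝ):ℂ) / ((Real.log y : ℝ):ℂ) with hc
      have hlogyC : ((Real.log y : ℝ):ℂ) ≠ 0 := by
        simp only [ne_eq, Complex.ofReal_eq_zero]
        linarith
      have hterm_eq : term p = c * ((∑ n ∈ Icc 1 (N/p), f n) * ((Real.log y : ℝ):ℂ)) := by
        rw [hterm, hc]
        field_simp
      have hnorm_c : ‖c‖ ≤ Real.log p / Real.log y := by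
        rw [hc, norm_div, norm_mul]
        have e1 : ‖((Real.log p : ℝ):ℂ)‖ = Real.log p := by
          rw [Complex.norm_real, Real.norm_eq_abs, abs_of_nonneg hlogp]
        have e2 : ‖((Real.log y : ℝ):ℂ)‖ = Real.log y := by
          rw [Complex.norm_real, Real.norm_eq_abs, abs_of_nonneg hlogy_pos.le]
        rw [e1, e2]
        have hnum : ‖f p‖ * Real.log p ≤ Real.log p := by nlinarith [hb p, norm_nonneg (f p)]
        exact (div_le_div_iff_of_pos_right hlogy_pos).2 hnum
      calc ‖term p - c * W‖ = ‖c * ((∑ n ∈ Icc 1 (N/p), f n) * ((Real.log y : ℝ):ℂ) - W)‖ := by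
            rw [hterm_eq, ← mul_sub]
        _ = ‖c‖ * ‖(∑ n ∈ Icc 1 (N/p), f n) * ((Real.log y : ℝ):ℂ) - W‖ := norm_mul _ _
        _ ≤ (Real.log p / Real.log y) * (17 * y) := by
            apply mul_le_mul hnorm_c hWlem (norm_nonneg _) (by positivity)
        _ ≤ 17 * x * (Real.exp (k:ℝ) / Real.log x) * (Real.log p / p) := by
            rw [hy]
            have hek_pos : (0:ℝ) < Real.exp (-(k:ℝ)) * Real.log x := by positivity
            have h1 : Real.log p / Real.log y ≤ Real.log p / (Real.exp (-(k:ℝ)) * Real.log x) :=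
              div_le_div_of_nonneg_left hlogp hek_pos hlogy_ge |>.trans_eq rfl
            have h2 : (0:ℝ) ≤ 17 * (x / p) := by positivity
            have h3 : Real.log p / Real.log y * (17 * (x/p))
                ≤ Real.log p / (Real.exp (-(k:ℝ)) * Real.log x) * (17 * (x/p)) := by
              apply mul_le_mul_of_nonneg_right h1 h2
            have h4 : Real.log p / (Real.exp (-(k:ℝ)) * Real.log x) * (17 * (x/p))
                = 17 * x * (Real.exp (k:ℝ) / Real.log x) * (Real.log p / p) := by
              rw [Real.exp_neg]
              field_simp
            linarith [h3, h4 ▸ h3]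
    have hsum1 : ∑ p ∈ Pk x k, 17 * x * (Real.exp (k:ℝ) / Real.log x) * (Real.log p / p)
        ≤ 2000 * x := by
      rw [← Finset.mul_sum]
      have hm := mertens_Pk x hx k
      have hek' := hek k hk
      have hpos : (0:ℝ) ≤ 17 * x * (Real.exp (k:ℝ) / Real.log x) := by positivity
      have h5 : ∑ p ∈ Pk x k, Real.log p / (p:ℝ) ≥ 0 := by
        apply Finset.sum_nonneg
        intro p hp
        simp only [Pk, Finset.mem_filter] at hp
        have h6 : (1:ℝ) ≤ p := by exact_mod_cast hp.2.1.one_lt.le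
        have := Real.log_nonneg h6
        positivity
      have hcollapse : Real.exp (k:ℝ) * Real.exp (1 - (k:ℝ)) = Real.exp 1 := by
        rw [← Real.exp_add]; congr 1; ring
      have hcollapse2 : Real.exp (k:ℝ) * Real.exp (-(k:ℝ)) = 1 := by
        rw [← Real.exp_add]; simp
      have hEle : Real.exp (k:ℝ) / Real.log x ≤ 8 := by
        rw [div_le_iff₀ hlx]; linarith [hek']
      have hEpos : (0:ℝ) ≤ Real.exp (k:ℝ) / Real.log x := by positivity
      have h9 : (Real.exp (k:ℝ) / Real.log x) * Real.log x = Real.exp (k:ℝ) :=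
        div_mul_cancel₀ _ (ne_of_gt hlx)
      have hkey : 17 * x * (Real.exp (k:ℝ) / Real.log x) *
          ((Real.exp (1 - (k:ℝ)) - Real.exp (-(k:ℝ))) * Real.log x + 13)
          = 17 * x * (Real.exp 1 - 1) + 221 * x * (Real.exp (k:ℝ) / Real.log x) := by
        calc 17 * x * (Real.exp (k:ℝ) / Real.log x) *
            ((Real.exp (1 - (k:ℝ)) - Real.exp (-(k:ℝ))) * Real.log x + 13)
            = 17 * x * ((Real.exp (k:ℝ) / Real.log x) * Real.log x *
                (Real.exp (1 - (k:ℝ)) - Real.exp (-(k:ℝ))))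
              + 221 * x * (Real.exp (k:ℝ) / Real.log x) := by ring
          _ = 17 * x * (Real.exp (k:ℝ) * Real.exp (1-(k:ℝ)) - Real.exp (k:ℝ) * Real.exp (-(k:ℝ)))
              + 221 * x * (Real.exp (k:ℝ)/Real.log x) := by rw [h9]; ring
          _ = _ := by rw [mul_sub, hcollapse, hcollapse2]; ring
      calc 17 * x * (Real.exp (k:ℝ) / Real.log x) * ∑ p ∈ Pk x k, Real.log p / (p:ℝ)
          ≤ 17 * x * (Real.exp (k:ℝ) / Real.log x) *
            ((Real.exp (1 - (k:ℝ)) - Real.exp (-(k:ℝ))) * Real.log x + 13) :=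
            mul_le_mul_of_nonneg_left hm hpos
        _ = 17 * x * (Real.exp 1 - 1) + 221 * x * (Real.exp (k:ℝ) / Real.log x) := hkey
        _ ≤ 2000 * x := by
            have he1 := Real.exp_one_lt_d9
            have h10 : 221 * x * (Real.exp (k:ℝ) / Real.log x) ≤ 221 * x * 8 := by
              apply mul_le_mul_of_nonneg_left hEle (by positivity)
            nlinarith [Real.exp_pos 1]
    calc ‖∑ p ∈ Pk x k, (term p - _)‖
        ≤ ∑ p ∈ Pk x k, 17 * x * (Real.exp (k:ℝ) / Real.log x) * (Real.log p / p) :=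
          le_trans (norm_sum_le _ _) (Finset.sum_le_sum hptermbd)
      _ ≤ 2000 * x := hsum1
  -- assemble
  have hBD : ‖(∑ p ∈ P, term p) - ∑ k ∈ Icc 1 K, Sk f x k‖
      ≤ 6000 * (x * Real.log (Real.log x)) := by
    rw [hBsum, ← Finset.sum_sub_distrib]
    have hKbound : (K:ℝ) ≤ 3 * Real.log (Real.log x) := by
      have h3 : (⌈Real.log (Real.log x)⌉₊:ℝ) < Real.log (Real.log x) + 1 :=
        Nat.ceil_lt_add_one (by linarith)
      have h4 : (K:ℝ) = (⌈Real.log (Real.log x)⌉₊:ℝ) + 1 := by rw [hK]; push_cast; ring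
      linarith
    calc ‖∑ k ∈ Icc 1 K, ((∑ p ∈ Pk x k, term p) - Sk f x k)‖
        ≤ ∑ k ∈ Icc 1 K, 2000 * x :=
          le_trans (norm_sum_le _ _) (Finset.sum_le_sum hperk)
      _ = (K:ℝ) * (2000 * x) := by
          rw [Finset.sum_const, Nat.card_Icc]; simp [nsmul_eq_mul]
      _ ≤ 3 * Real.log (Real.log x) * (2000 * x) := by
          apply mul_le_mul_of_nonneg_right hKbound (by positivity)
      _ = 6000 * (x * Real.log (Real.log x)) := by ring
  have hDbound : ‖∑ k ∈ Icc 1 K, Sk f x k‖ ≤ ∑ k ∈ Icc 1 K, ‖Sk f x k‖ := norm_sum_le _ _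
  -- final chain
  have hfinal : ‖∑ n ∈ Icc 1 N, f n‖ * Real.log x
      ≤ ∑ k ∈ Icc 1 K, ‖Sk f x k‖ + 6025 * (x * Real.log (Real.log x)) := by
    have h1 : ‖(∑ n ∈ Icc 1 N, f n) * ((Real.log x : ℝ):ℂ)‖
        = ‖∑ n ∈ Icc 1 N, f n‖ * Real.log x := by
      rw [norm_mul, Complex.norm_real, Real.norm_eq_abs, abs_of_nonneg hlx.le]
    have h2 : ‖(∑ n ∈ Icc 1 N, f n) * ((Real.log x : ℝ):ℂ)‖
        ≤ ‖(∑ n ∈ Icc 1 N, f n) * ((Real.log x : ℝ):ℂ) - ∑ p ∈ P, term p‖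
          + ‖(∑ p ∈ P, term p) - ∑ k ∈ Icc 1 K, Sk f x k‖
          + ‖∑ k ∈ Icc 1 K, Sk f x k‖ := by
      have := norm_add₃_le (a := (∑ n ∈ Icc 1 N, f n) * ((Real.log x : ℝ):ℂ) - ∑ p ∈ P, term p)
        (b := (∑ p ∈ P, term p) - ∑ k ∈ Icc 1 K, Sk f x k)
        (c := ∑ k ∈ Icc 1 K, Sk f x k)
      simpa using this
    rw [h1] at h2
    have hm25 : ‖(∑ n ∈ Icc 1 N, f n) * ((Real.log x : ℝ):ℂ) - ∑ p ∈ P, term p‖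
        ≤ 25 * (x * Real.log (Real.log x)) := hmain
    linarith
  -- divide by log x
  have hgoal : ‖∑ n ∈ Icc 1 N, f n‖
      ≤ (1 / Real.log x) * ∑ k ∈ Icc 1 K, ‖Sk f x k‖
        + 6025 * (x * Real.log (Real.log x) / Real.log x) := by
    rw [← le_div_iff₀ hlx] at hfinal
    calc ‖∑ n ∈ Icc 1 N, f n‖
        ≤ (∑ k ∈ Icc 1 K, ‖Sk f x k‖ + 6025 * (x * Real.log (Real.log x))) / Real.log x :=
          hfinal
      _ = (1 / Real.log x) * ∑ k ∈ Icc 1 K, ‖Sk f x k‖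
          + 6025 * (x * Real.log (Real.log x) / Real.log x) := by
          field_simp
  have habs_eq : ‖∑ n ∈ Icc 1 N, f n‖ = ‖∑ n ∈ Icc 1 N, f n‖ :=
    rfl
  have hSk_eq : ∀ k, ‖Sk f x k‖ = ‖Sk f x k‖ := fun k => rfl
  rw [habs_eq]
  have hsum_nonneg : 0 ≤ (1 / Real.log x) * ∑ k ∈ Icc 1 K, ‖Sk f x k‖ := by
    apply mul_nonneg (by positivity)
    apply Finset.sum_nonneg
    intro k _
    exact norm_nonneg _
  calc ‖∑ n ∈ Icc 1 N, f n‖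
      ≤ (1 / Real.log x) * ∑ k ∈ Icc 1 K, ‖Sk f x k‖
        + 6025 * (x * Real.log (Real.log x) / Real.log x) := hgoal
    _ ≤ 7000 * ((1 / Real.log x) * ∑ k ∈ Icc 1 K, ‖Sk f x k‖
        + x * Real.log (Real.log x) / Real.log x) := by
        have hpos2 : 0 ≤ x * Real.log (Real.log x) / Real.log x := by positivity
        nlinarith
    _ = 7000 * ((1 / Real.log x) * ∑ k ∈ Icc 1 (⌈Real.log (Real.log x)⌉₊ + 1),
          ‖Sk f x k‖ + x * Real.log (Real.log x) / Real.log x) := by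
        have : ∑ k ∈ Icc 1 K, ‖Sk f x k‖
            = ∑ k ∈ Icc 1 (⌈Real.log (Real.log x)⌉₊ + 1), ‖Sk f x k‖ := by
          apply Finset.sum_congr rfl
          intro k _
          exact (hSk_eq k).symm
        rw [this]
end
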